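/- arXiv:1309.4802 — 2 statements merged into one kernel-verified Lean document; each statement's English description precedes it below -/
import Mathlib

section
/- Let π be a permutation and let π_i and π_j (at positions i < j) be two elements of π, neither of which is a left-to-right minimum of π. Let π' be the permutation obtained from π by placing max(π_i, π_j) at position i, deleting the element at position j, and renumbering the remaining elements preserving relative order. Then π ≡ π' under the bidirectional replacement 123 ↔ 13★. -/
/-!
Pattern-replacement equivalences between permutations of different lengths
(arXiv:1309.4802). A ★-pattern is encoded as a `List (Option ℕ)`, where `none`
is the placeholder ★ and `some k` an integer entry.
-/

/-- A ★-pattern / star-string entry: `none` is ★, `some k` an integer `k`. -/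
abbrev SPat := List (Option ℕ)

/-- The integer entries of a star-string, in order. -/
def ints (ρ : SPat) : List ℕ := ρ.filterMap id

/-- Two lists of naturals are order-isomorphic. -/
def OrdIso (u v : List ℕ) : Prop :=
  u.length = v.length ∧
  ∀ i j, i < u.length → j < u.length → (u.getD i 0 < u.getD j 0 ↔ v.getD i 0 < v.getD j 0)

/-- A valid string of distinct positive integers and ★'s. -/
def StarStr (ρ : SPat) : Prop := (ints ρ).Nodup ∧ ∀ k ∈ ints ρ, 0 < k

/-- `r` (entry by entry) forms a copy of the ★-pattern `δ`: ★'s in the same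
positions, and the integer entries order-isomorphic. -/
def IsCopy (r δ : SPat) : Prop :=
  r.length = δ.length ∧
  (∀ i, (r.getD i none = none ↔ δ.getD i none = none)) ∧
  OrdIso (ints r) (ints δ)

/-- `Repl a b ρ₁ ρ₂` : `ρ₂` is obtained from `ρ₁` by replacing an occurrence of `a`
as a (not necessarily contiguous) substring of `ρ₁` by `b`, entry by entry at the
same positions. -/
inductive Repl : SPat → SPat → SPat → SPat → Prop
  | nil : Repl [] [] [] []
  | keep {a b ρ₁ ρ₂} (x : Option ℕ) : Repl a b ρ₁ ρ₂ → Repl a b (x :: ρ₁) (x :: ρ₂)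
  | repl {a b ρ₁ ρ₂} (x y : Option ℕ) :
      Repl a b ρ₁ ρ₂ → Repl (x :: a) (y :: b) (x :: ρ₁) (y :: ρ₂)

/-- `π` is a permutation of `1, …, n` (as a list). -/
def IsPermList (π : List ℕ) : Prop := π.Perm (List.range' 1 π.length)

/-- `σ` is a result of the replacement `α → β` applied to the permutation `π`:
(1) `ρ₁` is `π` renumbered (order-isomorphically) with ★'s inserted anywhere;
(2) a substring `a` of `ρ₁` forming a copy of `α` is replaced (in place) by a
string `b` that is a copy of `β`, whose integers meet `ρ₁` only inside `a`, and
which agrees with `a` on the integer entries common to `α` and `β`;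
(3) dropping ★'s and renumbering gives the permutation `σ`. -/
def IsResult (α β : SPat) (π σ : List ℕ) : Prop :=
  ∃ ρ₁ ρ₂ a b : SPat,
    StarStr ρ₁ ∧ OrdIso π (ints ρ₁) ∧
    IsCopy a α ∧
    StarStr b ∧ IsCopy b β ∧
    (∀ k ∈ ints b, k ∈ ints ρ₁ → k ∈ ints a) ∧
    (∀ i j x, α.getD i none = some x → β.getD j none = some x →
      a.getD i none = b.getD j none) ∧
    Repl a b ρ₁ ρ₂ ∧
    IsPermList σ ∧ OrdIso (ints ρ₂) σ

/-- Equivalence under the bidirectional replacement `α ↔ β`: a finite sequence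
of `α → β` and `β → α` replacements. -/
def PermEquiv (α β : SPat) (π σ : List ℕ) : Prop :=
  Relation.ReflTransGen (fun τ υ => IsResult α β τ υ ∨ IsResult β α τ υ) π σ

/-- `π` is isolated under `α ↔ β`: no other permutation is equivalent to it. -/
def Isolated (α β : SPat) (π : List ℕ) : Prop :=
  ∀ σ : List ℕ, IsPermList σ → PermEquiv α β π σ → σ = π

/-- The identity permutation `1 2 ⋯ n`. -/
def idPerm (n : ℕ) : List ℕ := List.range' 1 n

/-- The reverse identity permutation `n (n-1) ⋯ 1`. -/
def ridPerm (n : ℕ) : List ℕ := (List.range' 1 n).reverse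

def pat123 : SPat := [some 1, some 2, some 3]
def pat132 : SPat := [some 1, some 3, some 2]
def patS32 : SPat := [none, some 3, some 2]
def pat3S2 : SPat := [some 3, none, some 2]
def pat32S : SPat := [some 3, some 2, none]
def patS31 : SPat := [none, some 3, some 1]
def pat3S1 : SPat := [some 3, none, some 1]
def pat31S : SPat := [some 3, some 1, none]
def patS21 : SPat := [none, some 2, some 1]
def pat2S1 : SPat := [some 2, none, some 1]
def pat21S : SPat := [some 2, some 1, none]
def pat12S : SPat := [some 1, some 2, none]
def pat1S3 : SPat := [some 1, none, some 3]
def patS23 : SPat := [none, some 2, some 3]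
def patS12 : SPat := [none, some 1, some 2]
def pat23S : SPat := [some 2, some 3, none]
def pat13S : SPat := [some 1, some 3, none]
def pat1S2 : SPat := [some 1, none, some 2]

/-- The entry at (0-indexed) position `i` of `π` is a left-to-right minimum. -/
def IsLRMin (π : List ℕ) (i : ℕ) : Prop := ∀ j < i, π.getD i 0 < π.getD j 0

instance (π : List ℕ) (i : ℕ) : Decidable (IsLRMin π i) := by
  unfold IsLRMin; infer_instance

/-- The number of left-to-right minima of `π`. -/
def numLRMin (π : List ℕ) : ℕ :=
  ((List.range π.length).filter fun i => decide (IsLRMin π i)).length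

/-- `π` has at least one element that is not a left-to-right minimum. -/
def HasNonMin (π : List ℕ) : Prop := ∃ i < π.length, ¬ IsLRMin π i

/-- The 0-indexed position of the leftmost non-left-to-right-minimum, if any. -/
def leftNonMin (π : List ℕ) : Option ℕ :=
  (List.range π.length).find? fun i => ! decide (IsLRMin π i)

/-- The 0-indexed position of the rightmost non-left-to-right-minimum, if any. -/
def rightNonMin (π : List ℕ) : Option ℕ :=
  (List.range π.length).reverse.find? fun i => ! decide (IsLRMin π i)

/-- The values of the non-left-to-right-minimum entries of `π`. -/
def nonMinVals (π : List ℕ) : List ℕ :=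
  ((List.range π.length).filter fun i => ! decide (IsLRMin π i)).map fun i => π.getD i 0

/-- The largest non-left-to-right-minimum value of `π`. -/
def maxNonMin (π : List ℕ) : ℕ := (nonMinVals π).foldr max 0

/-- The smallest non-left-to-right-minimum value of `π`. -/
def minNonMin (π : List ℕ) : ℕ := (nonMinVals π).foldr min π.length

/-- The number of left-to-right minima of `π` whose value is less than the
value of the largest non-left-to-right-minimum element. -/
def vStatMax (π : List ℕ) : ℕ :=
  ((List.range π.length).filter fun i =>
    decide (IsLRMin π i) && decide (π.getD i 0 < maxNonMin π)).length

/-- The number of left-to-right minima of `π` whose value is less than the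
value of the smallest non-left-to-right-minimum element. -/
def vStatMin (π : List ℕ) : ℕ :=
  ((List.range π.length).filter fun i =>
    decide (IsLRMin π i) && decide (π.getD i 0 < minNonMin π)).length

/-- Renumber a list of distinct naturals, preserving relative order, into a
permutation of `1, …, n`. -/
def renumber (l : List ℕ) : List ℕ := l.map fun x => (l.filter fun y => y ≤ x).length

@[simp] lemma ints_nil : ints [] = [] := rfl
@[simp] lemma ints_append (l₁ l₂ : SPat) : ints (l₁ ++ l₂) = ints l₁ ++ ints l₂ :=
  List.filterMap_append
@[simp] lemma ints_cons_some (x : ℕ) (l : SPat) : ints (some x :: l) = x :: ints l := rfl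
@[simp] lemma ints_cons_none (l : SPat) : ints (none :: l) = ints l := rfl
@[simp] lemma ints_map_some (l : List ℕ) : ints (l.map some) = l := by
  simp [ints, List.filterMap_map]

lemma getD_map (l : List ℕ) (f : ℕ → ℕ) (i : ℕ) (h : i < l.length) :
    (l.map f).getD i 0 = f (l.getD i 0) := by
  rw [List.getD_eq_getElem _ _ h, List.getD_eq_getElem _ _ (by simpa using h)]
  simp

lemma ordIso_refl (l : List ℕ) : OrdIso l l := ⟨rfl, fun _ _ _ _ => Iff.rfl⟩
lemma ordIso_symm {u v : List ℕ} (h : OrdIso u v) : OrdIso v u :=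
  ⟨h.1.symm, fun i j hi hj => (h.2 i j (h.1 ▸ hi) (h.1 ▸ hj)).symm⟩
lemma ordIso_trans {u v w : List ℕ} (h1 : OrdIso u v) (h2 : OrdIso v w) : OrdIso u w :=
  ⟨h1.1.trans h2.1, fun i j hi hj =>
    (h1.2 i j hi hj).trans (h2.2 i j (h1.1 ▸ hi) (h1.1 ▸ hj))⟩

lemma ordIso_double (l : List ℕ) : OrdIso l (l.map fun x => 2 * x) := by
  refine ⟨by simp, fun i j hi hj => ?_⟩
  rw [getD_map _ _ _ hi, getD_map _ _ _ hj]
  omega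

-- rank function
lemma rk_mono {x x' : ℕ} (h : x ≤ x') (l : List ℕ) :
    (l.filter fun y => y ≤ x).length ≤ (l.filter fun y => y ≤ x').length := by
  induction l with
  | nil => simp
  | cons a t ih =>
    simp only [List.filter_cons]
    by_cases h1 : a ≤ x
    · simp [h1, show a ≤ x' by omega]; omega
    · by_cases h2 : a ≤ x' <;> simp [h1, h2] <;> omega

lemma rk_strict {x x' : ℕ} (h : x < x') {l : List ℕ} (hm : x' ∈ l) :
    (l.filter fun y => y ≤ x).length < (l.filter fun y => y ≤ x').length := by
  induction l with
  | nil => simp at hm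
  | cons a t ih =>
    simp only [List.filter_cons]
    rcases List.mem_cons.mp hm with rfl | hm'
    · have h1 : ¬ (x' ≤ x) := by omega
      simp [h1]
      have := rk_mono (le_of_lt h) t
      omega
    · have := ih hm'
      by_cases h1 : a ≤ x
      · simp [h1, show a ≤ x' by omega]; omega
      · by_cases h2 : a ≤ x' <;> simp [h1, h2] <;> omega

lemma rk_iff {x x' : ℕ} {l : List ℕ} (hx : x ∈ l) (hx' : x' ∈ l) :
    (x < x' ↔ (l.filter fun y => y ≤ x).length < (l.filter fun y => y ≤ x').length) := by
  constructor
  · exact fun h => rk_strict h hx'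
  · intro h
    by_contra hc
    have := rk_mono (show x' ≤ x by omega) l
    omega

lemma ordIso_renumber (l : List ℕ) : OrdIso l (renumber l) := by
  refine ⟨by simp [renumber], fun i j hi hj => ?_⟩
  rw [renumber, getD_map _ _ _ hi, getD_map _ _ _ hj]
  have m1 : l.getD i 0 ∈ l := by
    rw [List.getD_eq_getElem _ _ hi]; exact List.getElem_mem _
  have m2 : l.getD j 0 ∈ l := by
    rw [List.getD_eq_getElem _ _ hj]; exact List.getElem_mem _
  exact rk_iff m1 m2

lemma renumber_length (l : List ℕ) : (renumber l).length = l.length := by simp [renumber]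

lemma isPermList_renumber {l : List ℕ} (h : l.Nodup) : IsPermList (renumber l) := by
  rw [IsPermList, renumber_length]
  have hnd : (renumber l).Nodup := by
    refine List.Nodup.map_on ?_ h
    intro a ha b hb hab
    by_contra hne
    rcases Nat.lt_or_ge a b with hlt | hge
    · have := rk_strict hlt hb; omega
    · have := rk_strict (show b < a by omega) ha; omega
  have hsub : renumber l ⊆ List.range' 1 l.length := by
    intro k hk
    rw [renumber] at hk
    rcases List.mem_map.mp hk with ⟨a, ha, rfl⟩
    rw [List.mem_range'_1]
    constructor
    · have : a ∈ l.filter fun y => y ≤ a := by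
        rw [List.mem_filter]; simp [ha]
      have := List.length_pos_of_mem this
      omega
    · have := List.length_filter_le (fun y => decide (y ≤ a)) l
      omega
  have := (hnd.subperm hsub).perm_of_length_le (by simp [renumber_length])
  exact this

lemma renumber_double (l : List ℕ) : renumber (l.map fun x => 2 * x) = renumber l := by
  unfold renumber
  rw [List.map_map]
  apply List.map_congr_left
  intro a _
  simp only [Function.comp]
  rw [List.filter_map]
  rw [List.length_map]
  congr 1
  apply List.filter_congr
  intro b _
  simp only [Function.comp]
  congr 1
  simp

-- nodup / membership helpers for middle insertion/removal
lemma nodup_unmid {P Q : List ℕ} {y : ℕ} (h : (P ++ y :: Q).Nodup) : (P ++ Q).Nodup := by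
  have hp := (List.perm_middle (a := y) (l₁ := P) (l₂ := Q)).nodup_iff.mp h
  exact (List.nodup_cons.mp hp).2

lemma notmem_of_nodup_mid {P Q : List ℕ} {y : ℕ} (h : (P ++ y :: Q).Nodup) : y ∉ P ++ Q := by
  have hp := (List.perm_middle (a := y) (l₁ := P) (l₂ := Q)).nodup_iff.mp h
  exact (List.nodup_cons.mp hp).1

lemma nodup_mid {P Q : List ℕ} {y : ℕ} (h : (P ++ Q).Nodup) (hy : y ∉ P ++ Q) :
    (P ++ y :: Q).Nodup :=
  (List.perm_middle (a := y) (l₁ := P) (l₂ := Q)).nodup_iff.mpr (List.nodup_cons.mpr ⟨hy, h⟩)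

lemma repl_refl (ρ : SPat) : Repl [] [] ρ ρ := by
  induction ρ with
  | nil => exact .nil
  | cons x t ih => exact .keep x ih

lemma repl_prefix (L : SPat) {a b ρ₁ ρ₂ : SPat} (h : Repl a b ρ₁ ρ₂) :
    Repl a b (L ++ ρ₁) (L ++ ρ₂) := by
  induction L with
  | nil => exact h
  | cons x t ih => exact .keep x ih

lemma repl3 (A B C D : SPat) (a₁ a₂ a₃ b₁ b₂ b₃ : Option ℕ) :
    Repl [a₁, a₂, a₃] [b₁, b₂, b₃] (A ++ a₁ :: B ++ a₂ :: C ++ a₃ :: D)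
      (A ++ b₁ :: B ++ b₂ :: C ++ b₃ :: D) := by
  simpa using repl_prefix A (.repl a₁ b₁ (repl_prefix B (.repl a₂ b₂ (repl_prefix C (.repl a₃ b₃ (repl_refl D))))))

-- decomposition lemmas
lemma decomp3 {l : List ℕ} {p q r : ℕ} (hpq : p < q) (hqr : q < r) (hr : r < l.length) :
    ∃ A B C D : List ℕ,
      l = A ++ l.getD p 0 :: B ++ l.getD q 0 :: C ++ l.getD r 0 :: D ∧
      A.length = p ∧ B.length = q - p - 1 ∧ C.length = r - q - 1 := by
  refine ⟨l.take p, (l.drop (p+1)).take (q-p-1), (l.drop (q+1)).take (r-q-1), l.drop (r+1),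
    ?_, ?_, ?_, ?_⟩
  · rw [List.getD_eq_getElem _ _ (by omega), List.getD_eq_getElem _ _ (by omega),
      List.getD_eq_getElem _ _ (by omega)]
    have e1 : l.drop (p+1) = (l.drop (p+1)).take (q-p-1) ++ l.drop q := by
      conv_lhs => rw [← List.take_append_drop (q-p-1) (l.drop (p+1))]
      rw [List.drop_drop, show p + 1 + (q-p-1) = q by omega]
    have e2 : l.drop (q+1) = (l.drop (q+1)).take (r-q-1) ++ l.drop r := by
      conv_lhs => rw [← List.take_append_drop (r-q-1) (l.drop (q+1))]
      rw [List.drop_drop, show q + 1 + (r-q-1) = r by omega]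
    conv_lhs =>
      rw [← List.take_append_drop p l,
        List.drop_eq_getElem_cons (show p < l.length by omega), e1,
        List.drop_eq_getElem_cons (show q < l.length by omega), e2,
        List.drop_eq_getElem_cons (show r < l.length by omega)]
    simp [List.append_assoc]
  · simp; omega
  · simp; omega
  · simp; omega

lemma decomp4 {l : List ℕ} {p q r s : ℕ} (hpq : p < q) (hqr : q < r) (hrs : r < s)
    (hs : s < l.length) :
    ∃ A B C D E : List ℕ,
      l = A ++ l.getD p 0 :: B ++ l.getD q 0 :: C ++ l.getD r 0 :: D ++ l.getD s 0 :: E ∧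
      A.length = p ∧ B.length = q - p - 1 ∧ C.length = r - q - 1 ∧ D.length = s - r - 1 := by
  refine ⟨l.take p, (l.drop (p+1)).take (q-p-1), (l.drop (q+1)).take (r-q-1),
    (l.drop (r+1)).take (s-r-1), l.drop (s+1), ?_, ?_, ?_, ?_, ?_⟩
  · rw [List.getD_eq_getElem _ _ (by omega), List.getD_eq_getElem _ _ (by omega),
      List.getD_eq_getElem _ _ (by omega), List.getD_eq_getElem _ _ (by omega)]
    have e1 : l.drop (p+1) = (l.drop (p+1)).take (q-p-1) ++ l.drop q := by
      conv_lhs => rw [← List.take_append_drop (q-p-1) (l.drop (p+1))]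
      rw [List.drop_drop, show p + 1 + (q-p-1) = q by omega]
    have e2 : l.drop (q+1) = (l.drop (q+1)).take (r-q-1) ++ l.drop r := by
      conv_lhs => rw [← List.take_append_drop (r-q-1) (l.drop (q+1))]
      rw [List.drop_drop, show q + 1 + (r-q-1) = r by omega]
    have e3 : l.drop (r+1) = (l.drop (r+1)).take (s-r-1) ++ l.drop s := by
      conv_lhs => rw [← List.take_append_drop (s-r-1) (l.drop (r+1))]
      rw [List.drop_drop, show r + 1 + (s-r-1) = s by omega]
    conv_lhs =>
      rw [← List.take_append_drop p l,
        List.drop_eq_getElem_cons (show p < l.length by omega), e1,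
        List.drop_eq_getElem_cons (show q < l.length by omega), e2,
        List.drop_eq_getElem_cons (show r < l.length by omega), e3,
        List.drop_eq_getElem_cons (show s < l.length by omega)]
    simp [List.append_assoc]
  · simp; omega
  · simp; omega
  · simp; omega
  · simp; omega

lemma set_mid (P Q : List ℕ) (y w : ℕ) (i : ℕ) (hi : i = P.length) :
    (P ++ y :: Q).set i w = P ++ w :: Q := by
  subst hi
  rw [List.set_append]
  simp

lemma erase_mid (P Q : List ℕ) (y : ℕ) (j : ℕ) (hj : j = P.length) :
    (P ++ y :: Q).eraseIdx j = P ++ Q := by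
  subst hj
  rw [List.eraseIdx_append_of_length_le le_rfl]
  simp

lemma set_erase_decomp (A B C D : List ℕ) (x y z w : ℕ) (i j : ℕ)
    (hi : i = A.length + B.length + 1) (hj : j = A.length + B.length + C.length + 2) :
    ((A ++ x :: B ++ y :: C ++ z :: D).set i w).eraseIdx j = A ++ x :: B ++ w :: C ++ D := by
  have h1 : A ++ x :: B ++ y :: C ++ z :: D = (A ++ x :: B) ++ y :: (C ++ z :: D) := by simp
  rw [h1, set_mid _ _ _ _ _ (by simp only [List.length_append, List.length_cons]; omega)]
  have h2 : (A ++ x :: B) ++ w :: (C ++ z :: D) = ((A ++ x :: B) ++ w :: C) ++ z :: D := by simp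
  rw [h2, erase_mid _ _ _ _ (by simp only [List.length_append, List.length_cons]; omega)]

lemma perm_aux1 (P C D : List ℕ) (z : ℕ) : (P ++ z :: C ++ D).Perm (z :: (P ++ (C ++ D))) := by
  have e : P ++ z :: C ++ D = P ++ z :: (C ++ D) := by simp
  rw [e]; exact List.perm_middle

lemma perm_aux2 (P C D : List ℕ) (y z : ℕ) :
    (P ++ y :: C ++ z :: D).Perm (y :: z :: (P ++ (C ++ D))) := by
  have e : P ++ y :: C ++ z :: D = P ++ y :: (C ++ z :: D) := by simp
  rw [e]
  refine List.Perm.trans List.perm_middle (List.Perm.cons y ?_)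
  refine List.Perm.trans (List.Perm.append_left P List.perm_middle) List.perm_middle

lemma nodup_move_up (P C D : List ℕ) (y z : ℕ) (h : (P ++ y :: C ++ z :: D).Nodup) :
    (P ++ z :: C ++ D).Nodup := by
  have h1 := (perm_aux2 P C D y z).nodup_iff.mp h
  exact (perm_aux1 P C D z).nodup_iff.mpr (List.nodup_cons.mp h1).2

lemma nodup_move_down (P C D : List ℕ) (y z : ℕ) (h : (P ++ z :: C ++ D).Nodup)
    (hy : y ∉ P ++ z :: C ++ D) : (P ++ y :: C ++ z :: D).Nodup := by
  refine (perm_aux2 P C D y z).nodup_iff.mpr (List.nodup_cons.mpr ⟨?_, ?_⟩)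
  · intro hc
    exact hy ((perm_aux1 P C D z).mem_iff.mpr hc)
  · exact (perm_aux1 P C D z).nodup_iff.mp h

lemma ordIso3 {x y z : ℕ} (h1 : x < y) (h2 : y < z) : OrdIso [x, y, z] [1, 2, 3] := by
  refine ⟨rfl, fun i j hi hj => ?_⟩
  simp only [List.length_cons, List.length_nil] at hi hj
  interval_cases i <;> interval_cases j <;>
    simp [List.getD_cons_zero, List.getD_cons_succ] <;> omega

lemma ordIso2 {x z : ℕ} (h : x < z) : OrdIso [x, z] [1, 3] := by
  refine ⟨rfl, fun i j hi hj => ?_⟩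
  simp only [List.length_cons, List.length_nil] at hi hj
  interval_cases i <;> interval_cases j <;>
    simp [List.getD_cons_zero, List.getD_cons_succ] <;> omega

lemma fwd_move (A B C D : List ℕ) (x y z : ℕ) {S : List ℕ}
    (hS : S = A ++ x :: B ++ y :: C ++ z :: D)
    (hnd : S.Nodup) (hpos : ∀ k ∈ S, 0 < k)
    (hxy : x < y) (hyz : y < z) :
    IsResult pat123 pat13S S (renumber (A ++ x :: B ++ z :: C ++ D)) := by
  subst hS
  have hι₁ : ints (A.map some ++ some x :: B.map some ++ some y :: C.map some ++ some z :: D.map some)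
      = A ++ x :: B ++ y :: C ++ z :: D := by simp
  have hι₂ : ints (A.map some ++ some x :: B.map some ++ some z :: C.map some ++ none :: D.map some)
      = A ++ x :: B ++ z :: C ++ D := by simp
  have hndR : (A ++ x :: B ++ z :: C ++ D).Nodup := by
    have e : A ++ x :: B ++ y :: C ++ z :: D = (A ++ x :: B) ++ y :: C ++ z :: D := by simp
    have e2 : (A ++ x :: B) ++ z :: C ++ D = A ++ x :: B ++ z :: C ++ D := by simp
    rw [← e2]
    exact nodup_move_up _ _ _ _ _ (by rw [← e]; exact hnd)
  refine ⟨A.map some ++ some x :: B.map some ++ some y :: C.map some ++ some z :: D.map some,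
    A.map some ++ some x :: B.map some ++ some z :: C.map some ++ none :: D.map some,
    [some x, some y, some z], [some x, some z, none],
    ⟨by rw [hι₁]; exact hnd, by rw [hι₁]; exact hpos⟩,
    by rw [hι₁]; exact ordIso_refl _,
    ⟨rfl, ?_, by simpa [pat123] using ordIso3 hxy hyz⟩,
    ⟨by simp; omega, by
      intro k hk
      simp at hk
      rcases hk with rfl | rfl
      · exact hpos _ (by simp)
      · exact hpos _ (by simp)⟩,
    ⟨rfl, ?_, by simpa [pat13S] using ordIso2 (show x < z by omega)⟩,
    by
      intro k hk _
      simp at hk ⊢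
      tauto,
    ?_, repl3 _ _ _ _ _ _ _ _ _ _, isPermList_renumber hndR, by rw [hι₂]; exact ordIso_renumber _⟩
  · intro i
    rcases i with _ | _ | _ | i <;> simp [pat123]
  · intro i
    rcases i with _ | _ | _ | i <;> simp [pat13S]
  · intro i j w hi hj
    rcases i with _ | _ | _ | i <;> rcases j with _ | _ | _ | j <;>
      simp [pat123, pat13S, List.getD] at hi hj ⊢ <;> omega

lemma bwd_move (A B C D : List ℕ) (x y z : ℕ) {S : List ℕ}
    (hS : S = A ++ x :: B ++ z :: C ++ D)
    (hnd : S.Nodup) (hpos : ∀ k ∈ S, 0 < k) (hy0 : 0 < y) (hfresh : y ∉ S)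
    (hxy : x < y) (hyz : y < z) :
    IsResult pat13S pat123 S (renumber (A ++ x :: B ++ y :: C ++ z :: D)) := by
  subst hS
  have hι₁ : ints (A.map some ++ some x :: B.map some ++ some z :: C.map some ++ none :: D.map some)
      = A ++ x :: B ++ z :: C ++ D := by simp
  have hι₂ : ints (A.map some ++ some x :: B.map some ++ some y :: C.map some ++ some z :: D.map some)
      = A ++ x :: B ++ y :: C ++ z :: D := by simp
  have hndR : (A ++ x :: B ++ y :: C ++ z :: D).Nodup := by
    have e : A ++ x :: B ++ y :: C ++ z :: D = (A ++ x :: B) ++ y :: C ++ z :: D := by simp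
    have e2 : (A ++ x :: B) ++ z :: C ++ D = A ++ x :: B ++ z :: C ++ D := by simp
    rw [e]
    exact nodup_move_down _ _ _ _ _ (by rw [e2]; exact hnd) (by rw [e2]; exact hfresh)
  refine ⟨A.map some ++ some x :: B.map some ++ some z :: C.map some ++ none :: D.map some,
    A.map some ++ some x :: B.map some ++ some y :: C.map some ++ some z :: D.map some,
    [some x, some z, none], [some x, some y, some z],
    ⟨by rw [hι₁]; exact hnd, by rw [hι₁]; exact hpos⟩,
    by rw [hι₁]; exact ordIso_refl _,
    ⟨rfl, ?_, by simpa [pat13S] using ordIso2 (show x < z by omega)⟩,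
    ⟨by simp; omega, by
      intro k hk
      simp at hk
      rcases hk with rfl | rfl | rfl
      · exact hpos _ (by simp)
      · exact hy0
      · exact hpos _ (by simp)⟩,
    ⟨rfl, ?_, by simpa [pat123] using ordIso3 hxy hyz⟩,
    by
      intro k hk hk'
      rw [hι₁] at hk'
      simp at hk ⊢
      rcases hk with rfl | rfl | rfl
      · tauto
      · exact absurd hk' hfresh
      · tauto,
    ?_, repl3 _ _ _ _ _ _ _ _ _ _, isPermList_renumber hndR, by rw [hι₂]; exact ordIso_renumber _⟩
  · intro i
    rcases i with _ | _ | _ | i <;> simp [pat13S]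
  · intro i
    rcases i with _ | _ | _ | i <;> simp [pat123]
  · intro i j w hi hj
    rcases i with _ | _ | _ | i <;> rcases j with _ | _ | _ | j <;>
      simp [pat123, pat13S, List.getD] at hi hj ⊢ <;> omega

lemma isResult_congr {α β : SPat} {π π' σ : List ℕ} (h : OrdIso π' π)
    (hres : IsResult α β π σ) : IsResult α β π' σ := by
  obtain ⟨ρ₁, ρ₂, a, b, h1, h2, h3⟩ := hres
  exact ⟨ρ₁, ρ₂, a, b, h1, ordIso_trans h h2, h3⟩

lemma getD_ne {π : List ℕ} (hnd : π.Nodup) {a b : ℕ} (hab : a ≠ b)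
    (ha : a < π.length) (hb : b < π.length) : π.getD a 0 ≠ π.getD b 0 := by
  rw [List.getD_eq_getElem _ _ ha, List.getD_eq_getElem _ _ hb]
  intro h
  exact hab (hnd.getElem_inj_iff.mp h)


set_option maxHeartbeats 1000000 in
/-- let `π` be a permutation and let its entries at positions
`i < j` both fail to be left-to-right minima. Place the larger of the two
values at position `i`, delete the entry at position `j`, and renumber; the
result is equivalent to `π` under `123 ↔ 13★`. -/
theorem swap_nonLRmin_equiv (π : List ℕ) (hπ : IsPermList π) (i j : ℕ)
    (hij : i < j) (hj : j < π.length)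
    (hi : ¬ IsLRMin π i) (hjm : ¬ IsLRMin π j) :
    PermEquiv pat123 pat13S π
      (renumber ((π.set i (max (π.getD i 0) (π.getD j 0))).eraseIdx j)) := by
  have hnd : π.Nodup := hπ.nodup_iff.mpr List.nodup_range'
  have hpos : ∀ k ∈ π, 0 < k := by
    intro k hk
    have := List.mem_range'_1.mp (hπ.mem_iff.mp hk)
    omega
  -- witnesses
  unfold IsLRMin at hi hjm
  push_neg at hi hjm
  obtain ⟨p, hpi, hpu⟩ := hi
  obtain ⟨p', hp'j, hp'v⟩ := hjm
  have hpu' : π.getD p 0 < π.getD i 0 :=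
    lt_of_le_of_ne hpu (getD_ne hnd (by omega) (by omega) (by omega))
  have hp'v' : π.getD p' 0 < π.getD j 0 :=
    lt_of_le_of_ne hp'v (getD_ne hnd (by omega) (by omega) (by omega))
  have huv : π.getD i 0 ≠ π.getD j 0 := getD_ne hnd (by omega) (by omega) (by omega)
  set u := π.getD i 0 with hu
  set v := π.getD j 0 with hv
  rcases Nat.lt_or_ge u v with hlt | hge
  · -- CASE u < v : single forward move
    set x := π.getD p 0 with hx
    obtain ⟨A, B, C, D, hdec, hA, hB, hC⟩ := decomp3 hpi hij hj
    have etarget : (π.set i (max u v)).eraseIdx j = A ++ x :: B ++ v :: C ++ D := by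
      rw [Nat.max_eq_right (le_of_lt hlt), hdec]
      exact set_erase_decomp A B C D x u v v i j (by omega) (by omega)
    rw [etarget]
    exact Relation.ReflTransGen.single
      (Or.inl (fwd_move A B C D x u v hdec hnd hpos hpu' hlt))
  · have hvu : v < u := by omega
    have humax : max u v = u := Nat.max_eq_left (by omega)
    have hu1 : 0 < u := hpos _ (by rw [hu, List.getD_eq_getElem _ _ (by omega)]; exact List.getElem_mem _)
    by_cases hq : ∃ q, q < i ∧ π.getD q 0 < v
    · -- CASE 2a : witness below v before i
      obtain ⟨q, hqi, hqv⟩ := hq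
      set x := π.getD q 0 with hx
      have hxu : x < u := by omega
      obtain ⟨A, B, C, D, hdec, hA, hB, hC⟩ := decomp3 hqi hij hj
      rw [← hx, ← hu, ← hv] at hdec
      have etarget : (π.set i (max u v)).eraseIdx j = A ++ x :: B ++ u :: C ++ D := by
        rw [humax, hdec]
        exact set_erase_decomp A B C D x u v u i j (by omega) (by omega)
      rw [etarget]
      have hdec2 : π.map (fun t => 2 * t) = A.map (fun t => 2 * t) ++ (2*x) ::
          B.map (fun t => 2 * t) ++ (2*u) :: C.map (fun t => 2 * t) ++ (2*v) ::
          D.map (fun t => 2 * t) := by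
        rw [hdec]; simp
      have hnd2 : (π.map (fun t => 2 * t)).Nodup :=
        hnd.map (fun a b hab => by omega)
      have hpos2 : ∀ k ∈ π.map (fun t => 2 * t), 0 < k := by
        intro k hk
        rcases List.mem_map.mp hk with ⟨m, hm, rfl⟩
        have := hpos m hm; omega
      have hfresh : 2*u - 1 ∉ π.map (fun t => 2 * t) := by
        intro hk
        rcases List.mem_map.mp hk with ⟨m, hm, hmk⟩
        omega
      -- step 1 : backward move, insert y at position i, move 2u to after 2v
      have hS1 : π.map (fun t => 2 * t) = A.map (fun t => 2 * t) ++ (2*x) ::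
          B.map (fun t => 2 * t) ++ (2*u) :: (C.map (fun t => 2 * t) ++ [2*v]) ++
          D.map (fun t => 2 * t) := by
        rw [hdec2]; simp
      have step1 := bwd_move (A.map (fun t => 2 * t)) (B.map (fun t => 2 * t))
        (C.map (fun t => 2 * t) ++ [2*v]) (D.map (fun t => 2 * t)) (2*x) (2*u - 1) (2*u)
        hS1 hnd2 hpos2 (by omega) hfresh (by omega) (by omega)
      have eL1 : A.map (fun t => 2 * t) ++ (2*x) :: B.map (fun t => 2 * t) ++ (2*u - 1) ::
          (C.map (fun t => 2 * t) ++ [2*v]) ++ (2*u) :: D.map (fun t => 2 * t)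
          = A.map (fun t => 2 * t) ++ (2*x) :: B.map (fun t => 2 * t) ++ (2*u - 1) ::
          C.map (fun t => 2 * t) ++ (2*v) :: (2*u) :: D.map (fun t => 2 * t) := by simp
      rw [eL1] at step1
      have stepA : IsResult pat13S pat123 π (renumber (A.map (fun t => 2 * t) ++ (2*x) ::
          B.map (fun t => 2 * t) ++ (2*u - 1) :: C.map (fun t => 2 * t) ++ (2*v) ::
          (2*u) :: D.map (fun t => 2 * t))) :=
        isResult_congr (ordIso_double π) step1
      -- properties of L1
      have eS1b : (A.map (fun t => 2 * t) ++ (2*x) :: B.map (fun t => 2 * t)) ++ (2*u) ::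
          (C.map (fun t => 2 * t) ++ [2*v]) ++ D.map (fun t => 2 * t)
          = π.map (fun t => 2 * t) := by rw [hdec2]; simp
      have hndL1' := nodup_move_down (A.map (fun t => 2 * t) ++ (2*x) :: B.map (fun t => 2 * t))
        (C.map (fun t => 2 * t) ++ [2*v]) (D.map (fun t => 2 * t)) (2*u - 1) (2*u)
        (by rw [eS1b]; exact hnd2) (by rw [eS1b]; exact hfresh)
      have eL1b : (A.map (fun t => 2 * t) ++ (2*x) :: B.map (fun t => 2 * t)) ++ (2*u - 1) ::
          (C.map (fun t => 2 * t) ++ [2*v]) ++ (2*u) :: D.map (fun t => 2 * t)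
          = A.map (fun t => 2 * t) ++ (2*x) :: B.map (fun t => 2 * t) ++ (2*u - 1) ::
          C.map (fun t => 2 * t) ++ (2*v) :: (2*u) :: D.map (fun t => 2 * t) := by simp
      rw [eL1b] at hndL1'
      have hposL1 : ∀ k ∈ A.map (fun t => 2 * t) ++ (2*x) :: B.map (fun t => 2 * t) ++
          (2*u - 1) :: C.map (fun t => 2 * t) ++ (2*v) :: (2*u) :: D.map (fun t => 2 * t),
          0 < k := by
        intro k hk
        simp only [List.mem_append, List.mem_cons, List.mem_map] at hk
        rcases hk with ((⟨m, hm, rfl⟩ | (rfl | ⟨m, hm, rfl⟩)) | (rfl | ⟨m, hm, rfl⟩)) | (rfl | rfl | ⟨m, hm, rfl⟩)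
        · have := hpos m (by rw [hdec]; simp [hm]); omega
        · have := hpos x (by rw [hdec]; simp); omega
        · have := hpos m (by rw [hdec]; simp [hm]); omega
        · omega
        · have := hpos m (by rw [hdec]; simp [hm]); omega
        · have := hpos v (by rw [hdec]; simp); omega
        · omega
        · have := hpos m (by rw [hdec]; simp [hm]); omega
      -- step 2 : forward move, delete 2v and move 2u into its place (using 2x < 2v)
      have hS2 : A.map (fun t => 2 * t) ++ (2*x) :: B.map (fun t => 2 * t) ++ (2*u - 1) ::
          C.map (fun t => 2 * t) ++ (2*v) :: (2*u) :: D.map (fun t => 2 * t)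
          = A.map (fun t => 2 * t) ++ (2*x) :: (B.map (fun t => 2 * t) ++ (2*u - 1) ::
          C.map (fun t => 2 * t)) ++ (2*v) :: ([] : List ℕ) ++ (2*u) :: D.map (fun t => 2 * t) := by
        simp
      have step2 := fwd_move (A.map (fun t => 2 * t))
        (B.map (fun t => 2 * t) ++ (2*u - 1) :: C.map (fun t => 2 * t)) ([] : List ℕ)
        (D.map (fun t => 2 * t)) (2*x) (2*v) (2*u) hS2 hndL1' hposL1 (by omega) (by omega)
      have eL2 : A.map (fun t => 2 * t) ++ (2*x) :: (B.map (fun t => 2 * t) ++ (2*u - 1) ::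
          C.map (fun t => 2 * t)) ++ (2*u) :: ([] : List ℕ) ++ D.map (fun t => 2 * t)
          = A.map (fun t => 2 * t) ++ (2*x) :: B.map (fun t => 2 * t) ++ (2*u - 1) ::
          C.map (fun t => 2 * t) ++ (2*u) :: D.map (fun t => 2 * t) := by simp
      rw [eL2] at step2
      have stepB : IsResult pat123 pat13S
          (renumber (A.map (fun t => 2 * t) ++ (2*x) :: B.map (fun t => 2 * t) ++ (2*u - 1) ::
            C.map (fun t => 2 * t) ++ (2*v) :: (2*u) :: D.map (fun t => 2 * t)))
          (renumber (A.map (fun t => 2 * t) ++ (2*x) :: B.map (fun t => 2 * t) ++ (2*u - 1) ::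
            C.map (fun t => 2 * t) ++ (2*u) :: D.map (fun t => 2 * t))) :=
        isResult_congr (ordIso_symm (ordIso_renumber _)) step2
      -- properties of L2
      have hS2b : A.map (fun t => 2 * t) ++ (2*x) :: B.map (fun t => 2 * t) ++ (2*u - 1) ::
          C.map (fun t => 2 * t) ++ (2*v) :: (2*u) :: D.map (fun t => 2 * t)
          = (A.map (fun t => 2 * t) ++ (2*x) :: B.map (fun t => 2 * t) ++ (2*u - 1) ::
          C.map (fun t => 2 * t)) ++ (2*v) :: ([] : List ℕ) ++ (2*u) :: D.map (fun t => 2 * t) := by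
        simp
      have hndL2' := nodup_move_up (A.map (fun t => 2 * t) ++ (2*x) :: B.map (fun t => 2 * t) ++
          (2*u - 1) :: C.map (fun t => 2 * t)) ([] : List ℕ) (D.map (fun t => 2 * t))
          (2*v) (2*u) (by rw [← hS2b]; exact hndL1')
      have eL2b : (A.map (fun t => 2 * t) ++ (2*x) :: B.map (fun t => 2 * t) ++ (2*u - 1) ::
          C.map (fun t => 2 * t)) ++ (2*u) :: ([] : List ℕ) ++ D.map (fun t => 2 * t)
          = A.map (fun t => 2 * t) ++ (2*x) :: B.map (fun t => 2 * t) ++ (2*u - 1) ::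
          C.map (fun t => 2 * t) ++ (2*u) :: D.map (fun t => 2 * t) := by simp
      rw [eL2b] at hndL2'
      have hposL2 : ∀ k ∈ A.map (fun t => 2 * t) ++ (2*x) :: B.map (fun t => 2 * t) ++
          (2*u - 1) :: C.map (fun t => 2 * t) ++ (2*u) :: D.map (fun t => 2 * t), 0 < k := by
        intro k hk
        simp only [List.mem_append, List.mem_cons, List.mem_map] at hk
        rcases hk with ((⟨m, hm, rfl⟩ | (rfl | ⟨m, hm, rfl⟩)) | (rfl | ⟨m, hm, rfl⟩)) | (rfl | ⟨m, hm, rfl⟩)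
        · have := hpos m (by rw [hdec]; simp [hm]); omega
        · have := hpos x (by rw [hdec]; simp); omega
        · have := hpos m (by rw [hdec]; simp [hm]); omega
        · omega
        · have := hpos m (by rw [hdec]; simp [hm]); omega
        · omega
        · have := hpos m (by rw [hdec]; simp [hm]); omega
      -- step 3 : forward move, delete the helper y and move 2u back to position i
      have step3 := fwd_move (A.map (fun t => 2 * t)) (B.map (fun t => 2 * t))
        (C.map (fun t => 2 * t)) (D.map (fun t => 2 * t)) (2*x) (2*u - 1) (2*u)
        rfl hndL2' hposL2 (by omega) (by omega)
      have efin : renumber (A.map (fun t => 2 * t) ++ (2*x) :: B.map (fun t => 2 * t) ++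
          (2*u) :: C.map (fun t => 2 * t) ++ D.map (fun t => 2 * t))
          = renumber (A ++ x :: B ++ u :: C ++ D) := by
        have e : A.map (fun t => 2 * t) ++ (2*x) :: B.map (fun t => 2 * t) ++
            (2*u) :: C.map (fun t => 2 * t) ++ D.map (fun t => 2 * t)
            = (A ++ x :: B ++ u :: C ++ D).map (fun t => 2 * t) := by simp
        rw [e]
        exact renumber_double _
      rw [efin] at step3
      have stepC : IsResult pat123 pat13S
          (renumber (A.map (fun t => 2 * t) ++ (2*x) :: B.map (fun t => 2 * t) ++ (2*u - 1) ::
            C.map (fun t => 2 * t) ++ (2*u) :: D.map (fun t => 2 * t)))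
          (renumber (A ++ x :: B ++ u :: C ++ D)) :=
        isResult_congr (ordIso_symm (ordIso_renumber _)) step3
      exact Relation.ReflTransGen.head (Or.inr stepA)
        (Relation.ReflTransGen.head (Or.inl stepB)
          (Relation.ReflTransGen.single (Or.inl stepC)))
    · -- CASE 2b : witness below v strictly between i and j
      push_neg at hq
      have hip' : i < p' := by
        rcases Nat.lt_trichotomy p' i with h | h | h
        · exact absurd hp'v' (by have := hq p' h; omega)
        · subst h; omega
        · exact h
      set x := π.getD p 0 with hx
      set w := π.getD p' 0 with hw
      obtain ⟨A, B, C, E, D, hdec, hA, hB, hC, hE⟩ := decomp4 hpi hip' hp'j hj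
      rw [← hx, ← hu, ← hw, ← hv] at hdec
      have hxu : x < u := hpu'
      have hwv : w < v := hp'v'
      have emerge : π = A ++ x :: B ++ u :: (C ++ w :: E) ++ v :: D := by rw [hdec]; simp
      have etarget : (π.set i (max u v)).eraseIdx j = A ++ x :: B ++ u :: (C ++ w :: E) ++ D := by
        rw [humax, emerge]
        exact set_erase_decomp A B (C ++ w :: E) D x u v u i j (by omega)
          (by simp only [List.length_append, List.length_cons]; omega)
      rw [etarget]
      have hdec2 : π.map (fun t => 2 * t) = (A.map (fun t => 2 * t)) ++ (2*x) :: (B.map (fun t => 2 * t)) ++ (2*u) :: (C.map (fun t => 2 * t)) ++ (2*w) :: (E.map (fun t => 2 * t)) ++ (2*v) :: (D.map (fun t => 2 * t)) := by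
        rw [hdec]; simp
      have hnd2 : (π.map (fun t => 2 * t)).Nodup :=
        hnd.map (fun a b hab => by omega)
      have hpos2 : ∀ k ∈ π.map (fun t => 2 * t), 0 < k := by
        intro k hk
        rcases List.mem_map.mp hk with ⟨m, hm, rfl⟩
        have := hpos m hm; omega
      have hfresh : 2*u - 1 ∉ π.map (fun t => 2 * t) := by
        intro hk
        rcases List.mem_map.mp hk with ⟨m, hm, hmk⟩
        omega
      -- step 1 : backward move
      have hS1 : π.map (fun t => 2 * t) = (A.map (fun t => 2 * t)) ++ (2*x) :: (B.map (fun t => 2 * t)) ++ (2*u) :: ((C.map (fun t => 2 * t)) ++ (2*w) :: (E.map (fun t => 2 * t)) ++ [2*v]) ++ (D.map (fun t => 2 * t)) := by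
        rw [hdec2]; simp
      have step1 := bwd_move (A.map (fun t => 2 * t)) (B.map (fun t => 2 * t)) ((C.map (fun t => 2 * t)) ++ (2*w) :: (E.map (fun t => 2 * t)) ++ [2*v]) (D.map (fun t => 2 * t)) (2*x) (2*u - 1) (2*u)
        hS1 hnd2 hpos2 (by omega) hfresh (by omega) (by omega)
      have eL1 : (A.map (fun t => 2 * t)) ++ (2*x) :: (B.map (fun t => 2 * t)) ++ (2*u - 1) :: ((C.map (fun t => 2 * t)) ++ (2*w) :: (E.map (fun t => 2 * t)) ++ [2*v]) ++ (2*u) :: (D.map (fun t => 2 * t))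
          = (A.map (fun t => 2 * t)) ++ (2*x) :: (B.map (fun t => 2 * t)) ++ (2*u - 1) :: (C.map (fun t => 2 * t)) ++ (2*w) :: (E.map (fun t => 2 * t)) ++ (2*v) :: (2*u) :: (D.map (fun t => 2 * t)) := by simp
      rw [eL1] at step1
      have stepA : IsResult pat13S pat123 π
          (renumber ((A.map (fun t => 2 * t)) ++ (2*x) :: (B.map (fun t => 2 * t)) ++ (2*u - 1) :: (C.map (fun t => 2 * t)) ++ (2*w) :: (E.map (fun t => 2 * t)) ++ (2*v) :: (2*u) :: (D.map (fun t => 2 * t)))) :=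
        isResult_congr (ordIso_double π) step1
      -- nodup / positivity of L1
      have eS1b : ((A.map (fun t => 2 * t)) ++ (2*x) :: (B.map (fun t => 2 * t))) ++ (2*u) :: ((C.map (fun t => 2 * t)) ++ (2*w) :: (E.map (fun t => 2 * t)) ++ [2*v]) ++ (D.map (fun t => 2 * t))
          = π.map (fun t => 2 * t) := by rw [hdec2]; simp
      have hndL1' := nodup_move_down ((A.map (fun t => 2 * t)) ++ (2*x) :: (B.map (fun t => 2 * t))) ((C.map (fun t => 2 * t)) ++ (2*w) :: (E.map (fun t => 2 * t)) ++ [2*v]) (D.map (fun t => 2 * t))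
        (2*u - 1) (2*u) (by rw [eS1b]; exact hnd2) (by rw [eS1b]; exact hfresh)
      have eL1b : ((A.map (fun t => 2 * t)) ++ (2*x) :: (B.map (fun t => 2 * t))) ++ (2*u - 1) :: ((C.map (fun t => 2 * t)) ++ (2*w) :: (E.map (fun t => 2 * t)) ++ [2*v]) ++ (2*u) :: (D.map (fun t => 2 * t))
          = (A.map (fun t => 2 * t)) ++ (2*x) :: (B.map (fun t => 2 * t)) ++ (2*u - 1) :: (C.map (fun t => 2 * t)) ++ (2*w) :: (E.map (fun t => 2 * t)) ++ (2*v) :: (2*u) :: (D.map (fun t => 2 * t)) := by simp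
      rw [eL1b] at hndL1'
      have hposL1 : ∀ k ∈ (A.map (fun t => 2 * t)) ++ (2*x) :: (B.map (fun t => 2 * t)) ++ (2*u - 1) :: (C.map (fun t => 2 * t)) ++ (2*w) :: (E.map (fun t => 2 * t)) ++ (2*v) :: (2*u) :: (D.map (fun t => 2 * t)),
          0 < k := by
        intro k hk
        simp only [List.mem_append, List.mem_cons, List.mem_map] at hk
        rcases hk with (((⟨m, hm, rfl⟩ | (rfl | ⟨m, hm, rfl⟩)) | (rfl | ⟨m, hm, rfl⟩)) | (rfl | ⟨m, hm, rfl⟩)) | (rfl | rfl | ⟨m, hm, rfl⟩)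
        · have := hpos m (by rw [hdec]; simp [hm]); omega
        · have := hpos x (by rw [hdec]; simp); omega
        · have := hpos m (by rw [hdec]; simp [hm]); omega
        · omega
        · have := hpos m (by rw [hdec]; simp [hm]); omega
        · have := hpos w (by rw [hdec]; simp); omega
        · have := hpos m (by rw [hdec]; simp [hm]); omega
        · have := hpos v (by rw [hdec]; simp); omega
        · omega
        · have := hpos m (by rw [hdec]; simp [hm]); omega
      -- step 2 : forward move, delete 2v and move 2u into its place (witness 2w)
      have hS2 : (A.map (fun t => 2 * t)) ++ (2*x) :: (B.map (fun t => 2 * t)) ++ (2*u - 1) :: (C.map (fun t => 2 * t)) ++ (2*w) :: (E.map (fun t => 2 * t)) ++ (2*v) :: (2*u) :: (D.map (fun t => 2 * t))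
          = ((A.map (fun t => 2 * t)) ++ (2*x) :: (B.map (fun t => 2 * t)) ++ (2*u - 1) :: (C.map (fun t => 2 * t))) ++ (2*w) :: (E.map (fun t => 2 * t)) ++ (2*v) :: ([] : List ℕ) ++ (2*u) :: (D.map (fun t => 2 * t)) := by
        simp
      have step2 := fwd_move ((A.map (fun t => 2 * t)) ++ (2*x) :: (B.map (fun t => 2 * t)) ++ (2*u - 1) :: (C.map (fun t => 2 * t))) (E.map (fun t => 2 * t)) ([] : List ℕ) (D.map (fun t => 2 * t))
        (2*w) (2*v) (2*u) hS2 hndL1' hposL1 (by omega) (by omega)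
      have eL2 : ((A.map (fun t => 2 * t)) ++ (2*x) :: (B.map (fun t => 2 * t)) ++ (2*u - 1) :: (C.map (fun t => 2 * t))) ++ (2*w) :: (E.map (fun t => 2 * t)) ++ (2*u) :: ([] : List ℕ) ++ (D.map (fun t => 2 * t))
          = (A.map (fun t => 2 * t)) ++ (2*x) :: (B.map (fun t => 2 * t)) ++ (2*u - 1) :: (C.map (fun t => 2 * t)) ++ (2*w) :: (E.map (fun t => 2 * t)) ++ (2*u) :: (D.map (fun t => 2 * t)) := by simp
      rw [eL2] at step2
      have stepB : IsResult pat123 pat13S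
          (renumber ((A.map (fun t => 2 * t)) ++ (2*x) :: (B.map (fun t => 2 * t)) ++ (2*u - 1) :: (C.map (fun t => 2 * t)) ++ (2*w) :: (E.map (fun t => 2 * t)) ++ (2*v) :: (2*u) :: (D.map (fun t => 2 * t))))
          (renumber ((A.map (fun t => 2 * t)) ++ (2*x) :: (B.map (fun t => 2 * t)) ++ (2*u - 1) :: (C.map (fun t => 2 * t)) ++ (2*w) :: (E.map (fun t => 2 * t)) ++ (2*u) :: (D.map (fun t => 2 * t)))) :=
        isResult_congr (ordIso_symm (ordIso_renumber _)) step2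
      -- nodup / positivity of L2
      have hndL2' := nodup_move_up (((A.map (fun t => 2 * t)) ++ (2*x) :: (B.map (fun t => 2 * t)) ++ (2*u - 1) :: (C.map (fun t => 2 * t))) ++ (2*w) :: (E.map (fun t => 2 * t)))
        ([] : List ℕ) (D.map (fun t => 2 * t)) (2*v) (2*u)
        (by
          have e : (((A.map (fun t => 2 * t)) ++ (2*x) :: (B.map (fun t => 2 * t)) ++ (2*u - 1) :: (C.map (fun t => 2 * t))) ++ (2*w) :: (E.map (fun t => 2 * t))) ++ (2*v) :: ([] : List ℕ) ++ (2*u) :: (D.map (fun t => 2 * t))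
              = (A.map (fun t => 2 * t)) ++ (2*x) :: (B.map (fun t => 2 * t)) ++ (2*u - 1) :: (C.map (fun t => 2 * t)) ++ (2*w) :: (E.map (fun t => 2 * t)) ++ (2*v) :: (2*u) :: (D.map (fun t => 2 * t)) := by simp
          rw [e]; exact hndL1')
      have eL2b : (((A.map (fun t => 2 * t)) ++ (2*x) :: (B.map (fun t => 2 * t)) ++ (2*u - 1) :: (C.map (fun t => 2 * t))) ++ (2*w) :: (E.map (fun t => 2 * t))) ++ (2*u) :: ([] : List ℕ) ++ (D.map (fun t => 2 * t))
          = (A.map (fun t => 2 * t)) ++ (2*x) :: (B.map (fun t => 2 * t)) ++ (2*u - 1) :: (C.map (fun t => 2 * t)) ++ (2*w) :: (E.map (fun t => 2 * t)) ++ (2*u) :: (D.map (fun t => 2 * t)) := by simp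
      rw [eL2b] at hndL2'
      have hposL2 : ∀ k ∈ (A.map (fun t => 2 * t)) ++ (2*x) :: (B.map (fun t => 2 * t)) ++ (2*u - 1) :: (C.map (fun t => 2 * t)) ++ (2*w) :: (E.map (fun t => 2 * t)) ++ (2*u) :: (D.map (fun t => 2 * t)),
          0 < k := by
        intro k hk
        simp only [List.mem_append, List.mem_cons, List.mem_map] at hk
        rcases hk with (((⟨m, hm, rfl⟩ | (rfl | ⟨m, hm, rfl⟩)) | (rfl | ⟨m, hm, rfl⟩)) | (rfl | ⟨m, hm, rfl⟩)) | (rfl | ⟨m, hm, rfl⟩)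
        · have := hpos m (by rw [hdec]; simp [hm]); omega
        · have := hpos x (by rw [hdec]; simp); omega
        · have := hpos m (by rw [hdec]; simp [hm]); omega
        · omega
        · have := hpos m (by rw [hdec]; simp [hm]); omega
        · have := hpos w (by rw [hdec]; simp); omega
        · have := hpos m (by rw [hdec]; simp [hm]); omega
        · omega
        · have := hpos m (by rw [hdec]; simp [hm]); omega
      -- step 3 : forward move, delete the helper and move 2u back to position i
      have hS3 : (A.map (fun t => 2 * t)) ++ (2*x) :: (B.map (fun t => 2 * t)) ++ (2*u - 1) :: (C.map (fun t => 2 * t)) ++ (2*w) :: (E.map (fun t => 2 * t)) ++ (2*u) :: (D.map (fun t => 2 * t))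
          = (A.map (fun t => 2 * t)) ++ (2*x) :: (B.map (fun t => 2 * t)) ++ (2*u - 1) :: ((C.map (fun t => 2 * t)) ++ (2*w) :: (E.map (fun t => 2 * t))) ++ (2*u) :: (D.map (fun t => 2 * t)) := by simp
      have step3 := fwd_move (A.map (fun t => 2 * t)) (B.map (fun t => 2 * t)) ((C.map (fun t => 2 * t)) ++ (2*w) :: (E.map (fun t => 2 * t))) (D.map (fun t => 2 * t)) (2*x) (2*u - 1) (2*u)
        hS3 hndL2' hposL2 (by omega) (by omega)
      have efin : renumber ((A.map (fun t => 2 * t)) ++ (2*x) :: (B.map (fun t => 2 * t)) ++ (2*u) :: ((C.map (fun t => 2 * t)) ++ (2*w) :: (E.map (fun t => 2 * t))) ++ (D.map (fun t => 2 * t)))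
          = renumber (A ++ x :: B ++ u :: (C ++ w :: E) ++ D) := by
        have e : (A.map (fun t => 2 * t)) ++ (2*x) :: (B.map (fun t => 2 * t)) ++ (2*u) :: ((C.map (fun t => 2 * t)) ++ (2*w) :: (E.map (fun t => 2 * t))) ++ (D.map (fun t => 2 * t))
            = (A ++ x :: B ++ u :: (C ++ w :: E) ++ D).map (fun t => 2 * t) := by simp
        rw [e]
        exact renumber_double _
      rw [efin] at step3
      have stepC : IsResult pat123 pat13S
          (renumber ((A.map (fun t => 2 * t)) ++ (2*x) :: (B.map (fun t => 2 * t)) ++ (2*u - 1) :: (C.map (fun t => 2 * t)) ++ (2*w) :: (E.map (fun t => 2 * t)) ++ (2*u) :: (D.map (fun t => 2 * t))))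
          (renumber (A ++ x :: B ++ u :: (C ++ w :: E) ++ D)) :=
        isResult_congr (ordIso_symm (ordIso_renumber _)) step3
      exact Relation.ReflTransGen.head (Or.inr stepA)
        (Relation.ReflTransGen.head (Or.inl stepB)
          (Relation.ReflTransGen.single (Or.inl stepC)))
end

section
/- Under the bidirectional replacement 123 ↔ 13★: (a) every reverse identity permutation rid_n is isolated; (b) two permutations π and σ, each having at least one element that is not a left-to-right minimum, are equivalent if and only if they agree in all three of the following statistics: the number m of left-to-right minima, the position (from the left) of the leftmost non-left-to-right-minimum element, and the number v of left-to-right minima whose value is less than the value of the largest non-left-to-right-minimum element. Hence the equivalence classes are exactly the singletons {rid_n} together with one class for each attainable triple of statistics. -/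
open List

namespace PR

/-! ### basic OrdIso facts -/

theorem ordIso_rfl (u : List ℕ) : OrdIso u u := ⟨Eq.refl _, fun _ _ _ _ => Iff.rfl⟩

theorem OrdIso.symm {u v : List ℕ} (h : OrdIso u v) : OrdIso v u :=
  ⟨h.1.symm, fun i j hi hj => (h.2 i j (h.1 ▸ hi) (h.1 ▸ hj)).symm⟩

theorem OrdIso.trans {u v w : List ℕ} (h : OrdIso u v) (h' : OrdIso v w) : OrdIso u w :=
  ⟨h.1.trans h'.1, fun i j hi hj =>
    (h.2 i j hi hj).trans (h'.2 i j (h.1 ▸ hi) (h.1 ▸ hj))⟩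

/-! ### status lists -/

/-- `sts c u` : list of Booleans telling whether each entry of `u` is smaller than
everything before it (and smaller than the initial cap `c`). -/
def sts (c : ℕ) : List ℕ → List Bool
  | [] => []
  | a :: t => decide (a < c) :: sts (min c a) t

@[simp] theorem sts_nil (c : ℕ) : sts c [] = [] := rfl
@[simp] theorem sts_cons (c a : ℕ) (t : List ℕ) :
    sts c (a :: t) = decide (a < c) :: sts (min c a) t := rfl

@[simp] theorem length_sts (c : ℕ) (u : List ℕ) : (sts c u).length = u.length := by
  induction u generalizing c with
  | nil => rfl
  | cons a t ih => simp [ih]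

theorem sts_append (c : ℕ) (A B : List ℕ) :
    sts c (A ++ B) = sts c A ++ sts (A.foldl min c) B := by
  induction A generalizing c with
  | nil => rfl
  | cons a t ih => simp [ih]

theorem foldl_min_le (A : List ℕ) (c : ℕ) : A.foldl min c ≤ c := by
  induction A generalizing c with
  | nil => simp
  | cons a t ih => exact le_trans (ih _) (min_le_left _ _)

theorem foldl_min_le_mem {A : List ℕ} {a : ℕ} (h : a ∈ A) (c : ℕ) : A.foldl min c ≤ a := by
  induction A generalizing c with
  | nil => simp at h
  | cons b t ih =>
    rcases mem_cons.1 h with rfl | h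
    · exact le_trans (foldl_min_le t _) (min_le_right _ _)
    · exact ih h _

/-- capped-status characterisation. -/
theorem sts_getD (u : List ℕ) (c i : ℕ) (hi : i < u.length) :
    (sts c u).getD i false = (decide (u.getD i 0 < c) && decide (IsLRMin u i)) := by
  induction u generalizing c i with
  | nil => simp at hi
  | cons a t ih =>
    cases i with
    | zero =>
      simp [IsLRMin]
    | succ i =>
      have hi' : i < t.length := by simpa using hi
      have htail : IsLRMin (a :: t) (i + 1) ↔ (t.getD i 0 < a ∧ IsLRMin t i) := by
        constructor
        · intro h
          refine ⟨by simpa using h 0 (Nat.succ_pos _), fun j hj => ?_⟩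
          simpa using h (j + 1) (by omega)
        · rintro ⟨h1, h2⟩ j hj
          cases j with
          | zero => simpa using h1
          | succ j => simpa using h2 j (by omega)
      have := ih (min c a) i hi'
      simp only [sts_cons, getD_cons_succ, this, getD_cons_succ, htail]
      by_cases h1 : t.getD i 0 < c <;> by_cases h2 : t.getD i 0 < a <;>
        by_cases h3 : IsLRMin t i <;> simp [h1, h2, h3, lt_min_iff]

end PR

namespace PR
open List

/-! ### bridges from the statistics to status lists -/

theorem map_getD_range (u : List ℕ) :
    (range u.length).map (fun i => u.getD i 0) = u := by
  apply List.ext_getElem (by simp)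
  intro i h1 h2
  simp [getD_eq_getElem?_getD, getElem?_eq_getElem, h2]

theorem sts_getElem (u : List ℕ) (c i : ℕ) (hi : i < u.length)
    (h2 : i < (sts c u).length) :
    (sts c u)[i] = (decide (u[i] < c) && decide (IsLRMin u i)) := by
  have := sts_getD u c i hi
  rwa [getD_eq_getElem _ _ h2, getD_eq_getElem _ _ hi] at this

theorem capOK_B_eq_sts {u : List ℕ} {c : ℕ} (hc : ∀ a ∈ u, a < c) :
    (range u.length).map (fun i => decide (IsLRMin u i)) = sts c u := by
  apply List.ext_getElem (by simp)
  intro i h1 h2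
  have hi : i < u.length := by simpa using h2
  have hlt : u[i] < c := hc _ (getElem_mem _)
  rw [getElem_map, sts_getElem u c i hi h2, getElem_range]
  simp [hlt]

theorem zip_eq_map_range {u : List ℕ} {c : ℕ} (hc : ∀ a ∈ u, a < c) :
    (range u.length).map (fun i => (decide (IsLRMin u i), u.getD i 0)) = (sts c u).zip u := by
  apply List.ext_getElem (by simp)
  intro i h1 h2
  have hi : i < u.length := by simpa using h1
  have hiS : i < (sts c u).length := by simpa using hi
  have hlt : u[i] < c := hc _ (getElem_mem _)
  rw [getElem_map, getElem_zip, sts_getElem u c i hi hiS, getElem_range,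
    getD_eq_getElem _ _ hi]
  simp [hlt]
theorem numLRMin_eq_sts {u : List ℕ} {c : ℕ} (hc : ∀ a ∈ u, a < c) :
    numLRMin u = ((sts c u).filter (fun b => b)).length := by
  rw [← capOK_B_eq_sts hc, numLRMin, List.filter_map, length_map]
  rfl

/-- index of the first `true` entry. -/
def firstIdx : List Bool → Option ℕ
  | [] => none
  | b :: t => if b then some 0 else (firstIdx t).map (· + 1)

theorem find?_range_eq_firstIdx (g : ℕ → Bool) (N : ℕ) :
    (range N).find? g = firstIdx ((range N).map g) := by
  induction N generalizing g with
  | zero => rfl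
  | succ n ih =>
    rw [range_succ_eq_map]
    by_cases h : g 0
    · simp [find?_cons, h, firstIdx]
    · simp only [map_cons, find?_cons, h, Bool.false_eq_true, if_false, firstIdx, map_map]
      rw [List.find?_map, ih (g ∘ Nat.succ)]
      try (cases firstIdx (map (g ∘ Nat.succ) (range n)) <;> simp)

theorem leftNonMin_eq_sts {u : List ℕ} {c : ℕ} (hc : ∀ a ∈ u, a < c) :
    leftNonMin u = firstIdx ((sts c u).map (fun b => !b)) := by
  rw [leftNonMin, find?_range_eq_firstIdx, ← capOK_B_eq_sts hc, map_map]
  rfl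

theorem hasNonMin_iff_sts {u : List ℕ} {c : ℕ} (hc : ∀ a ∈ u, a < c) :
    HasNonMin u ↔ false ∈ sts c u := by
  rw [← capOK_B_eq_sts hc]
  simp [HasNonMin, mem_map, decide_eq_false_iff_not]

theorem filterMap_if_map {α β : Type} (f : α → Bool) (h : α → β) (l : List α) :
    l.filterMap (fun x => if f x then none else some (h x)) =
      (l.filter (fun x => !f x)).map h := by
  induction l with
  | nil => rfl
  | cons a t ih =>
    by_cases hf : f a <;> simp [hf, ih]

theorem nonMinVals_eq_sts {u : List ℕ} {c : ℕ} (hc : ∀ a ∈ u, a < c) :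
    nonMinVals u = ((sts c u).zip u).filterMap
      (fun p => if p.1 then none else some p.2) := by
  rw [← zip_eq_map_range hc, List.filterMap_map, nonMinVals]
  exact (filterMap_if_map (fun i => decide (IsLRMin u i)) (fun i => u.getD i 0)
    (range u.length)).symm

theorem vStat_eq_sts {u : List ℕ} {c : ℕ} (hc : ∀ a ∈ u, a < c) (P : ℕ → Bool) :
    ((range u.length).filter (fun i =>
        decide (IsLRMin u i) && P (u.getD i 0))).length =
    (((sts c u).zip u).filter (fun p => p.1 && P p.2)).length := by
  rw [← zip_eq_map_range hc, List.filter_map, length_map]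
  rfl

end PR

namespace PR
open List

/-! ### max folds -/

theorem le_foldr_max {a : ℕ} {L : List ℕ} (h : a ∈ L) : a ≤ L.foldr max 0 := by
  induction L with
  | nil => simp at h
  | cons b t ih =>
    rcases mem_cons.1 h with rfl | h
    · exact le_max_left _ _
    · exact le_trans (ih h) (le_max_right _ _)

theorem foldr_max_append (A B : List ℕ) :
    (A ++ B).foldr max 0 = max (A.foldr max 0) (B.foldr max 0) := by
  induction A with
  | nil => simp
  | cons a t ih => simp [ih, max_assoc]

theorem foldr_max_le {c : ℕ} {L : List ℕ} (hb : ∀ a ∈ L, a ≤ c) :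
    L.foldr max 0 ≤ c := by
  induction L with
  | nil => simp
  | cons a t ih =>
    simp only [foldr_cons]
    exact max_le (hb a (by simp)) (ih fun b h => hb b (by simp [h]))

theorem foldr_max_eq {c : ℕ} {L : List ℕ} (hm : c ∈ L) (hb : ∀ a ∈ L, a ≤ c) :
    L.foldr max 0 = c :=
  _root_.le_antisymm (foldr_max_le hb) (le_foldr_max hm)

/-- a cap for a list. -/
def cap (u : List ℕ) : ℕ := u.foldr max 0 + 1

theorem lt_cap {a : ℕ} {u : List ℕ} (h : a ∈ u) : a < cap u :=
  Nat.lt_succ_of_le (le_foldr_max h)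

/-! ### the concrete move on integer strings -/

/-- The one-step surgery `… x … y … z … ↦ … x … z … (gap) …` performed by the
replacement `123 → 13★` on the underlying integer strings. -/
def FMove (u v : List ℕ) : Prop :=
  ∃ I₁ I₂ I₃ I₄ : List ℕ, ∃ x y z : ℕ, x < y ∧ y < z ∧
    u = I₁ ++ x :: (I₂ ++ y :: (I₃ ++ z :: I₄)) ∧
    v = I₁ ++ x :: (I₂ ++ z :: (I₃ ++ I₄))

section FMoveCore

variable {I₁ I₂ I₃ I₄ : List ℕ} {x y z : ℕ} {u v : List ℕ}

theorem fmove_mem (hu : u = I₁ ++ x :: (I₂ ++ y :: (I₃ ++ z :: I₄)))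
    (hv : v = I₁ ++ x :: (I₂ ++ z :: (I₃ ++ I₄))) : ∀ a ∈ v, a ∈ u := by
  subst hu hv; intro a ha
  simp only [mem_append, mem_cons] at ha ⊢; tauto

theorem fmove_length (hu : u = I₁ ++ x :: (I₂ ++ y :: (I₃ ++ z :: I₄)))
    (hv : v = I₁ ++ x :: (I₂ ++ z :: (I₃ ++ I₄))) : v.length + 1 = u.length := by
  subst hu hv; simp; omega

theorem fmove_perm_u (hu : u = I₁ ++ x :: (I₂ ++ y :: (I₃ ++ z :: I₄))) :
    u.Perm (y :: ((I₁ ++ x :: I₂) ++ (I₃ ++ z :: I₄))) := by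
  subst hu
  have : I₁ ++ x :: (I₂ ++ y :: (I₃ ++ z :: I₄)) = (I₁ ++ x :: I₂) ++ y :: (I₃ ++ z :: I₄) := by
    simp
  rw [this]
  exact perm_middle

theorem fmove_perm_v (hv : v = I₁ ++ x :: (I₂ ++ z :: (I₃ ++ I₄))) :
    v.Perm ((I₁ ++ x :: I₂) ++ (I₃ ++ z :: I₄)) := by
  subst hv
  have : I₁ ++ x :: (I₂ ++ z :: (I₃ ++ I₄)) = (I₁ ++ x :: I₂) ++ z :: (I₃ ++ I₄) := by
    simp
  rw [this]
  exact ((perm_middle).symm.append_left (I₁ ++ x :: I₂))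

theorem fmove_nodup (hu : u = I₁ ++ x :: (I₂ ++ y :: (I₃ ++ z :: I₄)))
    (hv : v = I₁ ++ x :: (I₂ ++ z :: (I₃ ++ I₄))) (hnd : u.Nodup) :
    v.Nodup ∧ y ∉ v := by
  have h1 := (fmove_perm_u hu).nodup_iff.1 hnd
  have h2 : ((I₁ ++ x :: I₂) ++ (I₃ ++ z :: I₄)).Nodup := (nodup_cons.1 h1).2
  have h3 : y ∉ (I₁ ++ x :: I₂) ++ (I₃ ++ z :: I₄) := (nodup_cons.1 h1).1
  exact ⟨(fmove_perm_v hv).nodup_iff.2 h2, fun hy => h3 ((fmove_perm_v hv).mem_iff.1 hy)⟩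

theorem fmove_nodup_rev (hu : u = I₁ ++ x :: (I₂ ++ y :: (I₃ ++ z :: I₄)))
    (hv : v = I₁ ++ x :: (I₂ ++ z :: (I₃ ++ I₄))) (hnd : v.Nodup) (hy : y ∉ v) :
    u.Nodup := by
  refine (fmove_perm_u hu).nodup_iff.2 (nodup_cons.2 ⟨?_, (fmove_perm_v hv).nodup_iff.1 hnd⟩)
  intro hmem
  exact hy ((fmove_perm_v hv).mem_iff.2 hmem)

end FMoveCore

end PR

namespace PR
open List

theorem firstIdx_append_true (A : List Bool) (t t' : List Bool) :
    firstIdx (A ++ true :: t) = firstIdx (A ++ true :: t') := by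
  induction A with
  | nil => simp [firstIdx]
  | cons b B ih =>
    by_cases hb : b <;> simp [firstIdx, hb, ih]

theorem max_left_comm' (a b c : ℕ) : max a (max b c) = max b (max a c) := max_left_comm a b c

theorem foldr_max_move (A B C : List ℕ) (y z : ℕ) (hyz : y ≤ z) :
    (A ++ y :: (B ++ z :: C)).foldr max 0 = (A ++ z :: (B ++ C)).foldr max 0 := by
  simp only [foldr_max_append, foldr_cons]
  rw [max_left_comm' (B.foldr max 0) z (C.foldr max 0),
    max_eq_right (le_trans hyz (le_max_left z ((B.foldr max 0) ⊔ (C.foldr max 0))))]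

section FMoveCore

variable {I₁ I₂ I₃ I₄ : List ℕ} {x y z : ℕ} {u v : List ℕ}

theorem fmove_sts_shapes (hxy : x < y) (hyz : y < z)
    (hu : u = I₁ ++ x :: (I₂ ++ y :: (I₃ ++ z :: I₄)))
    (hv : v = I₁ ++ x :: (I₂ ++ z :: (I₃ ++ I₄))) (c : ℕ) :
    sts c u = sts c (I₁ ++ x :: I₂) ++ false ::
      (sts ((I₁ ++ x :: I₂).foldl min c) I₃ ++ false ::
        sts (I₃.foldl min ((I₁ ++ x :: I₂).foldl min c)) I₄) ∧
    sts c v = sts c (I₁ ++ x :: I₂) ++ false ::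
      (sts ((I₁ ++ x :: I₂).foldl min c) I₃ ++
        sts (I₃.foldl min ((I₁ ++ x :: I₂).foldl min c)) I₄) := by
  subst hu hv
  have hxP : x ∈ I₁ ++ x :: I₂ := by simp
  have hcP : (I₁ ++ x :: I₂).foldl min c ≤ x := foldl_min_le_mem hxP c
  have h1 : I₁ ++ x :: (I₂ ++ y :: (I₃ ++ z :: I₄)) =
      (I₁ ++ x :: I₂) ++ y :: (I₃ ++ z :: I₄) := by simp
  have h2 : I₁ ++ x :: (I₂ ++ z :: (I₃ ++ I₄)) =
      (I₁ ++ x :: I₂) ++ z :: (I₃ ++ I₄) := by simp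
  rw [h1, h2, sts_append c (I₁ ++ x :: I₂) (y :: (I₃ ++ z :: I₄)),
    sts_append c (I₁ ++ x :: I₂) (z :: (I₃ ++ I₄)), sts_cons, sts_cons]
  set cP := (I₁ ++ x :: I₂).foldl min c with hcPdef
  have hy' : ¬ (y < cP) := by omega
  have hz' : ¬ (z < cP) := by omega
  have hmy : min cP y = cP := min_eq_left (by omega)
  have hmz : min cP z = cP := min_eq_left (by omega)
  rw [hmy, hmz, sts_append ((I₁ ++ x :: I₂).foldl min c) I₃ (z :: I₄),
    sts_append ((I₁ ++ x :: I₂).foldl min c) I₃ I₄]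
  set c₃ := I₃.foldl min cP with hc3def
  have hc₃ : c₃ ≤ cP := foldl_min_le _ _
  have hz3 : ¬ (z < c₃) := by omega
  have hmz3 : min c₃ z = c₃ := min_eq_left (by omega)
  rw [sts_cons, hmz3]
  simp only [hy', hz', hz3, decide_eq_false_iff_not, cons_append, append_assoc,
    foldl_append, foldl_cons, nil_append, decide_eq_false hy', decide_eq_false hz',
    decide_eq_false hz3]
  have e1 : foldl min (min (foldl min c I₁) x) I₂ = cP := by
    rw [hcPdef, foldl_append]; rfl
  simp only [e1, ← hc3def]
  simp

theorem fmove_invariants (h : FMove u v) :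
    numLRMin u = numLRMin v ∧ leftNonMin u = leftNonMin v ∧ maxNonMin u = maxNonMin v ∧
      vStatMax u = vStatMax v ∧ HasNonMin u ∧ HasNonMin v := by
  obtain ⟨I₁, I₂, I₃, I₄, x, y, z, hxy, hyz, hu, hv⟩ := h
  set c := cap u with hcdef
  have hcu : ∀ a ∈ u, a < c := fun a ha => lt_cap ha
  have hcv : ∀ a ∈ v, a < c := fun a ha => lt_cap (fmove_mem hu hv a ha)
  obtain ⟨hSu, hSv⟩ := fmove_sts_shapes hxy hyz hu hv c
  set P := I₁ ++ x :: I₂ with hP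
  set cP := P.foldl min c with hcP
  set c₃ := I₃.foldl min cP with hc3
  -- lengths for zipping
  have l1 : (sts c P).length = P.length := length_sts _ _
  have l3 : (sts cP I₃).length = I₃.length := length_sts _ _
  have hu' : u = P ++ y :: (I₃ ++ z :: I₄) := by rw [hu]; simp [hP]
  have hv' : v = P ++ z :: (I₃ ++ I₄) := by rw [hv]; simp [hP]
  have hzu : (sts c u).zip u =
      (sts c P).zip P ++ (false, y) :: ((sts cP I₃).zip I₃ ++ (false, z) :: (sts c₃ I₄).zip I₄) := by
    rw [hSu]
    conv_lhs => rw [hu']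
    rw [zip_append l1, zip_cons_cons, zip_append l3, zip_cons_cons]
  have hzv : (sts c v).zip v =
      (sts c P).zip P ++ (false, z) :: ((sts cP I₃).zip I₃ ++ (sts c₃ I₄).zip I₄) := by
    rw [hSv]
    conv_lhs => rw [hv']
    rw [zip_append l1, zip_cons_cons, zip_append l3]
  -- the non-left-to-right-minimum values
  have hnmv_u : nonMinVals u =
      (((sts c P).zip P).filterMap (fun p => if p.1 then none else some p.2)) ++
        y :: ((((sts cP I₃).zip I₃).filterMap (fun p => if p.1 then none else some p.2)) ++
          z :: (((sts c₃ I₄).zip I₄).filterMap (fun p => if p.1 then none else some p.2))) := by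
    rw [nonMinVals_eq_sts hcu, hzu]; simp
  have hnmv_v : nonMinVals v =
      (((sts c P).zip P).filterMap (fun p => if p.1 then none else some p.2)) ++
        z :: ((((sts cP I₃).zip I₃).filterMap (fun p => if p.1 then none else some p.2)) ++
          (((sts c₃ I₄).zip I₄).filterMap (fun p => if p.1 then none else some p.2))) := by
    rw [nonMinVals_eq_sts hcv, hzv]; simp
  have hmax : maxNonMin u = maxNonMin v := by
    rw [maxNonMin, maxNonMin, hnmv_u, hnmv_v]
    exact foldr_max_move _ _ _ y z (le_of_lt hyz)
  refine ⟨?_, ?_, hmax, ?_, ?_, ?_⟩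
  · rw [numLRMin_eq_sts hcu, numLRMin_eq_sts hcv, hSu, hSv]
    simp
  · rw [leftNonMin_eq_sts hcu, leftNonMin_eq_sts hcv, hSu, hSv]
    simp only [map_append, map_cons, Bool.not_false]
    exact firstIdx_append_true _ _ _
  · rw [vStatMax, vStatMax, hmax]
    rw [vStat_eq_sts hcu (fun a => decide (a < maxNonMin v)),
      vStat_eq_sts hcv (fun a => decide (a < maxNonMin v)), hzu, hzv]
    simp
  · rw [hasNonMin_iff_sts hcu, hSu]; simp
  · rw [hasNonMin_iff_sts hcv, hSv]; simp

end FMoveCore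

end PR

namespace PR
open List

/-! ### `ints` and `Repl` -/

@[simp] theorem ints_nil : ints [] = [] := rfl
@[simp] theorem ints_cons_some (x : ℕ) (t : SPat) : ints (some x :: t) = x :: ints t := rfl
@[simp] theorem ints_cons_none (t : SPat) : ints (none :: t) = ints t := rfl
@[simp] theorem ints_append (A B : SPat) : ints (A ++ B) = ints A ++ ints B :=
  List.filterMap_append
@[simp] theorem ints_map_some (l : List ℕ) : ints (l.map some) = l := by
  induction l with
  | nil => rfl
  | cons a t ih =>
    show ints (some a :: t.map some) = a :: t
    rw [ints_cons_some, ih]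

theorem repl_nil_aux : ∀ {a b ρ₁ ρ₂ : SPat}, Repl a b ρ₁ ρ₂ → a = [] → ρ₁ = ρ₂ := by
  intro a b ρ₁ ρ₂ h
  induction h with
  | nil => intros; rfl
  | keep x h ih => intro ha; rw [ih ha]
  | repl x y h ih => intro ha; exact absurd ha (by simp)

theorem repl_nil {ρ₁ ρ₂ : SPat} (h : Repl [] [] ρ₁ ρ₂) : ρ₁ = ρ₂ :=
  repl_nil_aux h rfl

theorem repl_cons {a b ρ₁ ρ₂ : SPat} (h : Repl a b ρ₁ ρ₂) :
    ∀ {a₀ b₀ : Option ℕ} {a' b' : SPat}, a = a₀ :: a' → b = b₀ :: b' →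
    ∃ s t₁ t₂ : SPat, ρ₁ = s ++ a₀ :: t₁ ∧ ρ₂ = s ++ b₀ :: t₂ ∧ Repl a' b' t₁ t₂ := by
  induction h with
  | nil => intro a₀ b₀ a' b' ha hb; exact absurd ha (by simp)
  | keep x h ih =>
    intro a₀ b₀ a' b' ha hb
    obtain ⟨s, t₁, t₂, h1, h2, h3⟩ := ih ha hb
    exact ⟨x :: s, t₁, t₂, by simp [h1], by simp [h2], h3⟩
  | repl x y h =>
    intro a₀ b₀ a' b' ha hb
    obtain ⟨rfl, rfl⟩ : x = a₀ ∧ _ = a' := by simpa using ha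
    obtain ⟨rfl, rfl⟩ : y = b₀ ∧ _ = b' := by simpa using hb
    exact ⟨[], _, _, rfl, rfl, h⟩

theorem repl_refl (a : SPat) : Repl [] [] a a := by
  induction a with
  | nil => exact Repl.nil
  | cons x t ih => exact Repl.keep x ih

theorem repl_append_left {a b t₁ t₂ : SPat} (s : SPat) (h : Repl a b t₁ t₂) :
    Repl a b (s ++ t₁) (s ++ t₂) := by
  induction s with
  | nil => exact h
  | cons x s ih => exact Repl.keep x ih

/-! ### shapes of copies of the patterns -/

theorem getD3_none (a b c : Option ℕ) (n : ℕ) : ([a, b, c] : SPat).getD (n + 3) none = none := by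
  simp [List.getD]

theorem copy123 {r : SPat} (h : IsCopy r pat123) :
    ∃ x y z : ℕ, r = [some x, some y, some z] ∧ x < y ∧ y < z := by
  obtain ⟨hl, hstar, hord⟩ := h
  obtain ⟨r0, r1, r2, rfl⟩ := List.length_eq_three.1 (by simpa [pat123] using hl)
  have h0 : r0 ≠ none := by have := hstar 0; simp [pat123] at this; simpa using this
  have h1 : r1 ≠ none := by have := hstar 1; simp [pat123] at this; simpa using this
  have h2 : r2 ≠ none := by have := hstar 2; simp [pat123] at this; simpa using this
  obtain ⟨x, rfl⟩ := Option.ne_none_iff_exists'.1 h0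
  obtain ⟨y, rfl⟩ := Option.ne_none_iff_exists'.1 h1
  obtain ⟨z, rfl⟩ := Option.ne_none_iff_exists'.1 h2
  refine ⟨x, y, z, rfl, ?_, ?_⟩
  · have := (hord.2 0 1 (by simp [ints]) (by simp [ints])).2
    simpa [ints, pat123] using this
  · have := (hord.2 1 2 (by simp [ints]) (by simp [ints])).2
    simpa [ints, pat123] using this

theorem copy13S {r : SPat} (h : IsCopy r pat13S) :
    ∃ x z : ℕ, r = [some x, some z, none] ∧ x < z := by
  obtain ⟨hl, hstar, hord⟩ := h
  obtain ⟨r0, r1, r2, rfl⟩ := List.length_eq_three.1 (by simpa [pat13S] using hl)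
  have h0 : r0 ≠ none := by have := hstar 0; simp [pat13S] at this; simpa using this
  have h1 : r1 ≠ none := by have := hstar 1; simp [pat13S] at this; simpa using this
  obtain ⟨x, rfl⟩ := Option.ne_none_iff_exists'.1 h0
  obtain ⟨z, rfl⟩ := Option.ne_none_iff_exists'.1 h1
  have h2 : r2 = none := by
    have := (hstar 2).2 (by simp [pat13S]); simpa using this
  subst h2
  refine ⟨x, z, rfl, ?_⟩
  have := (hord.2 0 1 (by simp [ints]) (by simp [ints])).2
  simpa [ints, pat13S] using this

theorem mk_copy123 {x y z : ℕ} (hxy : x < y) (hyz : y < z) :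
    IsCopy [some x, some y, some z] pat123 := by
  refine ⟨by simp [pat123], ?_, by simp [ints, pat123], ?_⟩
  · intro i
    match i with
    | 0 => simp [pat123]
    | 1 => simp [pat123]
    | 2 => simp [pat123]
    | (n+3) => simp [getD3_none, pat123]
  · intro i j hi hj
    simp only [ints_cons_some, ints_nil, length_cons, length_nil] at hi hj
    interval_cases i <;> interval_cases j <;> simp [List.getD, pat123, ints] <;> omega

theorem mk_copy13S {x z : ℕ} (hxz : x < z) :
    IsCopy [some x, some z, none] pat13S := by
  refine ⟨by simp [pat13S], ?_, by simp [ints, pat13S], ?_⟩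
  · intro i
    match i with
    | 0 => simp [pat13S]
    | 1 => simp [pat13S]
    | 2 => simp [pat13S]
    | (n+3) => simp [getD3_none, pat13S]
  · intro i j hi hj
    simp only [ints_cons_some, ints_cons_none, ints_nil, length_cons, length_nil] at hi hj
    interval_cases i <;> interval_cases j <;> simp [List.getD, pat13S, ints] <;> omega

end PR

namespace PR
open List

/-! ### statistics are order-isomorphism invariants -/

theorem mem_nonMinVals {u : List ℕ} {a : ℕ} :
    a ∈ nonMinVals u ↔ ∃ i, i < u.length ∧ ¬IsLRMin u i ∧ u.getD i 0 = a := by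
  simp [nonMinVals, mem_filter, mem_range]
  constructor
  · rintro ⟨i, ⟨hi, hm⟩, rfl⟩; exact ⟨i, hi, hm, rfl⟩
  · rintro ⟨i, hi, hm, rfl⟩; exact ⟨i, ⟨hi, hm⟩, rfl⟩

theorem foldr_max_mem : ∀ {L : List ℕ}, L ≠ [] → L.foldr max 0 ∈ L := by
  intro L
  induction L with
  | nil => intro h; exact absurd rfl h
  | cons a t ih =>
    intro _
    rcases eq_or_ne t [] with rfl | ht
    · simp
    · rcases max_choice a (t.foldr max 0) with h | h <;> rw [foldr_cons, h]
      · exact mem_cons_self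
      · exact mem_cons_of_mem _ (ih ht)

theorem maxNonMin_spec {u : List ℕ} (h : HasNonMin u) :
    ∃ k, k < u.length ∧ ¬IsLRMin u k ∧ u.getD k 0 = maxNonMin u ∧
      ∀ j, j < u.length → ¬IsLRMin u j → u.getD j 0 ≤ maxNonMin u := by
  obtain ⟨i, hi, hm⟩ := h
  have hne : nonMinVals u ≠ [] := by
    intro hnil
    have : u.getD i 0 ∈ nonMinVals u := mem_nonMinVals.2 ⟨i, hi, hm, rfl⟩
    simp [hnil] at this
  have hmem : maxNonMin u ∈ nonMinVals u := foldr_max_mem hne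
  obtain ⟨k, hk, hmk, hvk⟩ := mem_nonMinVals.1 hmem
  exact ⟨k, hk, hmk, hvk, fun j hj hmj =>
    le_foldr_max (mem_nonMinVals.2 ⟨j, hj, hmj, rfl⟩)⟩

theorem noNonMin_maxNonMin {u : List ℕ} (h : ¬HasNonMin u) : maxNonMin u = 0 := by
  have : nonMinVals u = [] := by
    rcases hv : nonMinVals u with _ | ⟨a, t⟩
    · rfl
    · exfalso
      obtain ⟨i, hi, hm, _⟩ := mem_nonMinVals.1 (hv ▸ mem_cons_self (a := a) (l := t))
      exact h ⟨i, hi, hm⟩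
  simp [maxNonMin, this]

theorem ordIso_isLRMin {u w : List ℕ} (h : OrdIso u w) {i : ℕ} (hi : i < u.length) :
    IsLRMin u i ↔ IsLRMin w i := by
  unfold IsLRMin
  exact forall_congr' fun j => forall_congr' fun hj => h.2 i j hi (lt_trans hj hi)

theorem ordIso_stats {u w : List ℕ} (h : OrdIso u w) :
    numLRMin u = numLRMin w ∧ leftNonMin u = leftNonMin w ∧
      vStatMax u = vStatMax w ∧ (HasNonMin u ↔ HasNonMin w) := by
  have hlen := h.1
  have hst : ∀ i ∈ range u.length, decide (IsLRMin u i) = decide (IsLRMin w i) := by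
    intro i hi
    exact decide_eq_decide.2 (ordIso_isLRMin h (by simpa using hi))
  have hHNM : HasNonMin u ↔ HasNonMin w := by
    unfold HasNonMin
    rw [← hlen]
    exact exists_congr fun i => and_congr_right fun hi => not_congr (ordIso_isLRMin h hi)
  refine ⟨?_, ?_, ?_, hHNM⟩
  · rw [numLRMin, numLRMin, ← hlen, filter_congr hst]
  · rw [leftNonMin, leftNonMin, ← hlen, find?_range_eq_firstIdx, find?_range_eq_firstIdx]
    congr 1
    exact map_congr_left fun i hi => by rw [hst i hi]
  · by_cases hnm : HasNonMin u
    · obtain ⟨k, hk, hmk, hvk, hbd⟩ := maxNonMin_spec hnm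
      have hmkw : ¬IsLRMin w k := fun hc => hmk ((ordIso_isLRMin h hk).2 hc)
      have hbdw : ∀ j, j < w.length → ¬IsLRMin w j → w.getD j 0 ≤ w.getD k 0 := by
        intro j hj hmj
        have hju : j < u.length := hlen ▸ hj
        have hmju : ¬IsLRMin u j := fun hc => hmj ((ordIso_isLRMin h hju).1 hc)
        have := hbd j hju hmju
        rw [← hvk] at this
        by_contra hcon
        push_neg at hcon
        exact absurd ((h.2 k j hk hju).2 hcon) (by omega)
      have hmaxw : maxNonMin w = w.getD k 0 :=
        foldr_max_eq (mem_nonMinVals.2 ⟨k, hlen ▸ hk, hmkw, rfl⟩)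
          (fun a ha => by
            obtain ⟨j, hj, hmj, rfl⟩ := mem_nonMinVals.1 ha
            exact hbdw j hj hmj)
      rw [vStatMax, vStatMax, ← hlen]
      congr 1
      apply filter_congr
      intro i hi
      have hiu : i < u.length := by simpa using hi
      by_cases hmin : IsLRMin u i
      · have hminw : IsLRMin w i := (ordIso_isLRMin h hiu).1 hmin
        have : (u.getD i 0 < maxNonMin u) ↔ (w.getD i 0 < maxNonMin w) := by
          rw [← hvk, hmaxw]
          exact h.2 i k hiu hk
        have e1 : decide (IsLRMin u i) = true := decide_eq_true hmin
        have e2 : decide (IsLRMin w i) = true := decide_eq_true hminw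
        rw [e1, e2, Bool.true_and, Bool.true_and]
        exact decide_eq_decide.2 this
      · have hminw : ¬IsLRMin w i := fun hc => hmin ((ordIso_isLRMin h hiu).2 hc)
        simp [hmin, hminw]
    · have hnmw : ¬HasNonMin w := fun hc => hnm (hHNM.2 hc)
      have h1 := noNonMin_maxNonMin hnm
      have h2 := noNonMin_maxNonMin hnmw
      rw [vStatMax, vStatMax, h1, h2]
      simp

end PR

namespace PR
open List

/-! ### extraction: from `IsResult` to `FMove` data -/

theorem extract_F {π σ : List ℕ} (h : IsResult pat123 pat13S π σ) :
    ∃ u v : List ℕ, u.Nodup ∧ (∀ k ∈ u, 0 < k) ∧ OrdIso π u ∧ FMove u v ∧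
      OrdIso v σ ∧ IsPermList σ := by
  obtain ⟨ρ₁, ρ₂, a, b, hS1, hOI1, hCa, hSb, hCb, hmeet, hshare, hrepl, hpermσ, hOI2⟩ := h
  obtain ⟨x, y, z, rfl, hxy, hyz⟩ := copy123 hCa
  obtain ⟨x', z', rfl, hx'z'⟩ := copy13S hCb
  have e0 : x = x' := by
    have := hshare 0 0 1 (by simp [pat123, List.getD]) (by simp [pat13S, List.getD])
    simpa [List.getD] using this
  have e2 : z = z' := by
    have := hshare 2 1 3 (by simp [pat123, List.getD]) (by simp [pat13S, List.getD])
    simpa [List.getD] using this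
  subst e0
  subst e2
  obtain ⟨s₁, t₁, t₂, rfl, rfl, hr1⟩ := repl_cons hrepl rfl rfl
  obtain ⟨s₂, t₁', t₂', rfl, rfl, hr2⟩ := repl_cons hr1 rfl rfl
  obtain ⟨s₃, t₁'', t₂'', rfl, rfl, hr3⟩ := repl_cons hr2 rfl rfl
  have hteq := repl_nil hr3
  subst hteq
  refine ⟨ints (s₁ ++ some x :: (s₂ ++ some y :: (s₃ ++ some z :: t₁''))),
    ints (s₁ ++ some x :: (s₂ ++ some z :: (s₃ ++ none :: t₁''))),
    hS1.1, hS1.2, hOI1, ?_, hOI2, hpermσ⟩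
  refine ⟨ints s₁, ints s₂, ints s₃, ints t₁'', x, y, z, hxy, hyz, ?_, ?_⟩ <;> simp

theorem extract_R {π σ : List ℕ} (h : IsResult pat13S pat123 π σ) :
    ∃ s l : List ℕ, s.Nodup ∧ (∀ k ∈ s, 0 < k) ∧ l.Nodup ∧ (∀ k ∈ l, 0 < k) ∧
      OrdIso π s ∧ FMove l s ∧ OrdIso l σ ∧ IsPermList σ := by
  obtain ⟨ρ₁, ρ₂, a, b, hS1, hOI1, hCa, hSb, hCb, hmeet, hshare, hrepl, hpermσ, hOI2⟩ := h
  obtain ⟨x, z, rfl, hxz⟩ := copy13S hCa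
  obtain ⟨x', y, z', rfl, hx'y, hyz'⟩ := copy123 hCb
  have e0 : x = x' := by
    have := hshare 0 0 1 (by simp [pat13S, List.getD]) (by simp [pat123, List.getD])
    have h2 : x' = x := by simpa [List.getD] using this.symm
    omega
  have e2 : z = z' := by
    have := hshare 1 2 3 (by simp [pat13S, List.getD]) (by simp [pat123, List.getD])
    have h2 : z' = z := by simpa [List.getD] using this.symm
    omega
  subst e0
  subst e2
  obtain ⟨s₁, t₁, t₂, rfl, rfl, hr1⟩ := repl_cons hrepl rfl rfl
  obtain ⟨s₂, t₁', t₂', rfl, rfl, hr2⟩ := repl_cons hr1 rfl rfl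
  obtain ⟨s₃, t₁'', t₂'', rfl, rfl, hr3⟩ := repl_cons hr2 rfl rfl
  have hteq := repl_nil hr3
  subst hteq
  have hy_notin : y ∉ ints (s₁ ++ some x :: (s₂ ++ some z :: (s₃ ++ none :: t₁''))) := by
    intro hmem
    have := hmeet y (by simp) hmem
    simp at this
    omega
  have hu : ints (s₁ ++ some x :: (s₂ ++ some y :: (s₃ ++ some z :: t₁''))) =
      ints s₁ ++ x :: (ints s₂ ++ y :: (ints s₃ ++ z :: ints t₁'')) := by simp
  have hv : ints (s₁ ++ some x :: (s₂ ++ some z :: (s₃ ++ none :: t₁''))) =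
      ints s₁ ++ x :: (ints s₂ ++ z :: (ints s₃ ++ ints t₁'')) := by simp
  have hlnd : (ints (s₁ ++ some x :: (s₂ ++ some y :: (s₃ ++ some z :: t₁'')))).Nodup := by
    rw [hu]
    exact fmove_nodup_rev rfl rfl (hv ▸ hS1.1) (hv ▸ hy_notin)
  have hlpos : ∀ k ∈ ints (s₁ ++ some x :: (s₂ ++ some y :: (s₃ ++ some z :: t₁''))), 0 < k := by
    intro k hk
    rw [hu] at hk
    simp only [mem_append, mem_cons] at hk
    have hxpos : 0 < x := hS1.2 x (by simp)
    rcases hk with hk | hk | hk | hk | hk | hk | hk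
    · exact hS1.2 k (by simp [hk])
    · omega
    · exact hS1.2 k (by simp [hk])
    · omega
    · exact hS1.2 k (by simp [hk])
    · exact hS1.2 k (by simp [hk])
    · exact hS1.2 k (by simp [hk])
  refine ⟨_, _, hS1.1, hS1.2, hlnd, hlpos, hOI1, ?_, hOI2, hpermσ⟩
  exact ⟨ints s₁, ints s₂, ints s₃, ints t₁'', x, y, z, hx'y, hyz', hu, hv⟩

/-! ### construction: from `FMove` data to `IsResult` -/

theorem mkStepF {π σ u v : List ℕ} (hnd : u.Nodup) (hpos : ∀ k ∈ u, 0 < k)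
    (hOI1 : OrdIso π u) (hmv : FMove u v) (hOI2 : OrdIso v σ) (hσ : IsPermList σ) :
    IsResult pat123 pat13S π σ := by
  obtain ⟨I₁, I₂, I₃, I₄, x, y, z, hxy, hyz, hu, hv⟩ := hmv
  have hxmem : x ∈ u := by rw [hu]; simp
  have hymem : y ∈ u := by rw [hu]; simp
  have hzmem : z ∈ u := by rw [hu]; simp
  refine ⟨I₁.map some ++ some x :: (I₂.map some ++ some y :: (I₃.map some ++ some z :: I₄.map some)),
    I₁.map some ++ some x :: (I₂.map some ++ some z :: (I₃.map some ++ none :: I₄.map some)),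
    [some x, some y, some z], [some x, some z, none], ?_, ?_, mk_copy123 hxy hyz, ?_,
    mk_copy13S (lt_trans hxy hyz), ?_, ?_, ?_, hσ, ?_⟩
  · constructor <;> simp [← hu] <;> [exact hnd; exact hpos]
  · simpa [← hu] using hOI1
  · constructor
    · simp [ints]; omega
    · simp [ints]
      exact ⟨hpos x hxmem, hpos z hzmem⟩
  · intro k hk hk2
    simp [ints] at hk ⊢
    tauto
  · intro i j w hi hj
    rcases i with _|_|_|i <;> rcases j with _|_|_|j <;>
      simp [pat123, pat13S, List.getD] at hi hj ⊢ <;> omega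
  · apply repl_append_left
    apply Repl.repl
    apply repl_append_left
    apply Repl.repl
    apply repl_append_left
    apply Repl.repl
    exact repl_refl _
  · simpa [← hv] using hOI2

theorem mkStepR {π σ s l : List ℕ} (hnd : l.Nodup) (hpos : ∀ k ∈ l, 0 < k)
    (hOI1 : OrdIso π s) (hmv : FMove l s) (hOI2 : OrdIso l σ) (hσ : IsPermList σ) :
    IsResult pat13S pat123 π σ := by
  obtain ⟨I₁, I₂, I₃, I₄, x, y, z, hxy, hyz, hl, hs⟩ := hmv
  have hxmem : x ∈ l := by rw [hl]; simp
  have hymem : y ∈ l := by rw [hl]; simp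
  have hzmem : z ∈ l := by rw [hl]; simp
  obtain ⟨hsnd, hynots⟩ := fmove_nodup hl hs hnd
  have hspos : ∀ k ∈ s, 0 < k := fun k hk => hpos k (fmove_mem hl hs k hk)
  refine ⟨I₁.map some ++ some x :: (I₂.map some ++ some z :: (I₃.map some ++ none :: I₄.map some)),
    I₁.map some ++ some x :: (I₂.map some ++ some y :: (I₃.map some ++ some z :: I₄.map some)),
    [some x, some z, none], [some x, some y, some z], ?_, ?_, mk_copy13S (lt_trans hxy hyz), ?_,
    mk_copy123 hxy hyz, ?_, ?_, ?_, hσ, ?_⟩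
  · constructor <;> simp [← hs] <;> [exact hsnd; exact hspos]
  · simpa [← hs] using hOI1
  · constructor
    · simp [ints]; omega
    · simp [ints]
      exact ⟨hpos x hxmem, hpos y hymem, hpos z hzmem⟩
  · intro k hk hk2
    simp [ints] at hk ⊢
    simp [← hs] at hk2
    rcases hk with rfl | rfl | rfl
    · left; rfl
    · exact absurd hk2 hynots
    · right; rfl
  · intro i j w hi hj
    rcases i with _|_|_|i <;> rcases j with _|_|_|j <;>
      simp [pat123, pat13S, List.getD] at hi hj ⊢ <;> omega
  · apply repl_append_left
    apply Repl.repl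
    apply repl_append_left
    apply Repl.repl
    apply repl_append_left
    apply Repl.repl
    exact repl_refl _
  · simpa [← hl] using hOI2

end PR

namespace PR
open List

/-! ### invariance along chains, symmetry -/

/-- one step of the equivalence. -/
def Step (τ υ : List ℕ) : Prop :=
  IsResult pat123 pat13S τ υ ∨ IsResult pat13S pat123 τ υ

theorem permEquiv_def (π σ : List ℕ) :
    PermEquiv pat123 pat13S π σ ↔ Relation.ReflTransGen Step π σ := Iff.rfl

theorem step_invariants {τ υ : List ℕ} (h : Step τ υ) :
    numLRMin τ = numLRMin υ ∧ leftNonMin τ = leftNonMin υ ∧ vStatMax τ = vStatMax υ ∧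
      HasNonMin τ ∧ HasNonMin υ ∧ IsPermList υ := by
  rcases h with h | h
  · obtain ⟨u, v, hnd, hpos, hOI1, hmv, hOI2, hperm⟩ := extract_F h
    obtain ⟨m1, l1, v1, hn1⟩ := ordIso_stats hOI1
    obtain ⟨mM, lM, _, vM, hnmU, hnmV⟩ := fmove_invariants hmv
    obtain ⟨m2, l2, v2, hn2⟩ := ordIso_stats hOI2
    exact ⟨m1.trans (mM.trans m2), l1.trans (lM.trans l2), v1.trans (vM.trans v2),
      hn1.2 hnmU, hn2.1 hnmV, hperm⟩
  · obtain ⟨s, l, hsnd, hspos, hlnd, hlpos, hOI1, hmv, hOI2, hperm⟩ := extract_R h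
    obtain ⟨m1, l1, v1, hn1⟩ := ordIso_stats hOI1
    obtain ⟨mM, lM, _, vM, hnmL, hnmS⟩ := fmove_invariants hmv
    obtain ⟨m2, l2, v2, hn2⟩ := ordIso_stats hOI2
    exact ⟨m1.trans (mM.symm.trans m2), l1.trans (lM.symm.trans l2),
      v1.trans (vM.symm.trans v2), hn1.2 hnmS, hn2.1 hnmL, hperm⟩

theorem equiv_invariants {π σ : List ℕ} (h : PermEquiv pat123 pat13S π σ) :
    numLRMin π = numLRMin σ ∧ leftNonMin π = leftNonMin σ ∧ vStatMax π = vStatMax σ := by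
  induction h with
  | refl => exact ⟨rfl, rfl, rfl⟩
  | tail _ step ih =>
    obtain ⟨h1, h2, h3, _⟩ := step_invariants step
    exact ⟨ih.1.trans h1, ih.2.1.trans h2, ih.2.2.trans h3⟩

theorem equiv_isPermList {π σ : List ℕ} (hπ : IsPermList π)
    (h : PermEquiv pat123 pat13S π σ) : IsPermList σ := by
  induction h with
  | refl => exact hπ
  | tail _ step _ => exact (step_invariants step).2.2.2.2.2

theorem step_symm {τ υ : List ℕ} (hτ : IsPermList τ) (h : Step τ υ) : Step υ τ := by
  rcases h with h | h
  · obtain ⟨u, v, hnd, hpos, hOI1, hmv, hOI2, hperm⟩ := extract_F h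
    exact Or.inr (mkStepR hnd hpos (OrdIso.symm hOI2) hmv (OrdIso.symm hOI1) hτ)
  · obtain ⟨s, l, hsnd, hspos, hlnd, hlpos, hOI1, hmv, hOI2, hperm⟩ := extract_R h
    exact Or.inl (mkStepF hlnd hlpos (OrdIso.symm hOI2) hmv (OrdIso.symm hOI1) hτ)

theorem permEquiv_symm {π σ : List ℕ} (hπ : IsPermList π)
    (h : PermEquiv pat123 pat13S π σ) : PermEquiv pat123 pat13S σ π := by
  induction h with
  | refl => exact Relation.ReflTransGen.refl
  | tail hchain step ih =>
    have hmid : IsPermList _ := equiv_isPermList hπ hchain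
    exact Relation.ReflTransGen.head (step_symm hmid step) ih

/-! ### part (a) : reverse identities are isolated -/

theorem getD_append_self (A : List ℕ) (x : ℕ) (B : List ℕ) :
    (A ++ x :: B).getD A.length 0 = x := by
  induction A with
  | nil => rfl
  | cons a t ih => simpa using ih

theorem getD_append_shift (A : List ℕ) (x : ℕ) (B : List ℕ) (k : ℕ) :
    (A ++ x :: B).getD (A.length + 1 + k) 0 = B.getD k 0 := by
  induction A with
  | nil => simp [Nat.add_comm 1 k]
  | cons a t ih =>
    have : t.length + 1 + 1 + k = (t.length + 1 + k) + 1 := by omega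
    simpa [this] using ih

theorem ridPerm_length (n : ℕ) : (ridPerm n).length = n := by simp [ridPerm]

theorem ridPerm_getD {n i : ℕ} (hi : i < n) : (ridPerm n).getD i 0 = n - i := by
  have h1 : i < (ridPerm n).length := by rw [ridPerm_length]; omega
  rw [getD_eq_getElem _ _ h1]
  simp [ridPerm, List.getElem_reverse, List.getElem_range']
  omega

theorem rid_anti {n i j : ℕ} (hij : i < j) (hj : j < n) :
    (ridPerm n).getD j 0 < (ridPerm n).getD i 0 := by
  rw [ridPerm_getD hj, ridPerm_getD (lt_trans hij hj)]
  omega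

theorem no_ascent_contra {π u I₁ I₂ T : List ℕ} {x w : ℕ} (hOI : OrdIso π u)
    (hanti : ∀ i j, i < j → j < π.length → π.getD j 0 < π.getD i 0)
    (hdec : u = I₁ ++ x :: (I₂ ++ w :: T)) (hxw : x < w) : False := by
  have hlen : π.length = u.length := hOI.1
  have hpx : I₁.length < u.length := by simp [hdec] <;> omega
  have hpy : I₁.length + 1 + I₂.length < u.length := by simp [hdec] <;> omega
  have hux : u.getD I₁.length 0 = x := by rw [hdec]; exact getD_append_self _ _ _
  have huy : u.getD (I₁.length + 1 + I₂.length) 0 = w := by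
    rw [hdec, getD_append_shift]
    exact getD_append_self _ _ _
  have hasc : u.getD I₁.length 0 < u.getD (I₁.length + 1 + I₂.length) 0 := by
    rw [hux, huy]; exact hxw
  have := (hOI.2 I₁.length (I₁.length + 1 + I₂.length) (hlen ▸ hpx) (hlen ▸ hpy)).2 hasc
  have h2 := hanti I₁.length (I₁.length + 1 + I₂.length) (by omega) (hlen ▸ hpy)
  omega

theorem rid_no_step {n : ℕ} {υ : List ℕ} (h : Step (ridPerm n) υ) : False := by
  rcases h with h | h
  · obtain ⟨u, v, _, _, hOI1, hmv, _, _⟩ := extract_F h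
    obtain ⟨I₁, I₂, I₃, I₄, x, y, z, hxy, hyz, hu, hv⟩ := hmv
    exact no_ascent_contra hOI1 (fun i j hij hj => rid_anti hij (by
      simpa [ridPerm_length] using hj)) hu hxy
  · obtain ⟨s, l, _, _, _, _, hOI1, hmv, _, _⟩ := extract_R h
    obtain ⟨I₁, I₂, I₃, I₄, x, y, z, hxy, hyz, hl, hs⟩ := hmv
    exact no_ascent_contra hOI1 (fun i j hij hj => rid_anti hij (by
      simpa [ridPerm_length] using hj)) hs (lt_trans hxy hyz)

theorem part_a : ∀ n : ℕ, Isolated pat123 pat13S (ridPerm n) := by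
  intro n σ hσ h
  rcases Relation.ReflTransGen.cases_head h with rfl | ⟨c, hstep, _⟩
  · rfl
  · exact absurd hstep rid_no_step

end PR

namespace PR
open List

/-! ### list surgery kit -/

/-- entries of `L` at positions `a, …, b-1`. -/
def slice (L : List ℕ) (a b : ℕ) : List ℕ := (L.take b).drop a

theorem length_slice {L : List ℕ} {a b : ℕ} (hb : b ≤ L.length) :
    (slice L a b).length = b - a := by
  simp [slice]; omega

theorem take_split {L : List ℕ} {i c : ℕ} (hic : i < c) (hc : c ≤ L.length) :
    L.take c = L.take i ++ L.getD i 0 :: slice L (i + 1) c := by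
  have hi : i < L.length := lt_of_lt_of_le hic hc
  have h1 : i < (L.take c).length := by simp; omega
  conv_lhs => rw [← take_append_drop i (L.take c)]
  rw [take_take, min_eq_left (le_of_lt hic), drop_eq_getElem_cons h1,
    getElem_take, getD_eq_getElem _ _ hi]
  rfl

theorem drop_split {L : List ℕ} {a b : ℕ} (hab : a ≤ b) :
    L.drop a = slice L a b ++ L.drop b := by
  conv_lhs => rw [← take_append_drop b L]
  rw [drop_append]
  have h2 : drop (a - (L.take b).length) (L.drop b) = L.drop b := by
    rcases le_or_gt b L.length with h | h
    · rw [length_take, min_eq_left h, Nat.sub_eq_zero_of_le hab, drop_zero]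
    · rw [drop_of_length_le (le_of_lt h)]; simp
  rw [h2]
  rfl

theorem drop_split_elem {L : List ℕ} {i : ℕ} (hi : i < L.length) :
    L.drop i = L.getD i 0 :: L.drop (i + 1) := by
  rw [drop_eq_getElem_cons hi, getD_eq_getElem _ _ hi]

theorem slice_split {L : List ℕ} {a m b : ℕ} (ham : a ≤ m) (hmb : m < b) (hb : b ≤ L.length) :
    slice L a b = slice L a m ++ L.getD m 0 :: slice L (m + 1) b := by
  have h1 : slice L a b = (L.take b).drop a := rfl
  have h2 : (L.take b).drop a = slice (L.take b) a m ++ (L.take b).drop m :=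
    drop_split ham
  have h3 : slice (L.take b) a m = slice L a m := by
    unfold slice
    rw [take_take, min_eq_left (le_of_lt hmb)]
  have h4 : (L.take b).drop m = L.getD m 0 :: slice L (m+1) b := by
    have hm : m < (L.take b).length := by simp; omega
    rw [drop_eq_getElem_cons hm, getElem_take, getD_eq_getElem _ _ (by omega)]
    rfl
  rw [h1, h2, h3, h4]

theorem slice_nil {L : List ℕ} {a b : ℕ} (h : b ≤ a) : slice L a b = [] := by
  apply eq_nil_of_length_eq_zero
  simp [slice]
  omega

/-- two-point split. -/
theorem split2 {L : List ℕ} {i c : ℕ} (hic : i < c) (hc : c < L.length) :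
    L = L.take i ++ L.getD i 0 :: (slice L (i + 1) c ++ L.getD c 0 :: L.drop (c + 1)) := by
  conv_lhs => rw [← take_append_drop c L, take_split hic (le_of_lt hc),
    drop_split_elem hc]
  simp

/-- one-point split. -/
theorem split1 {L : List ℕ} {i : ℕ} (hi : i < L.length) :
    L = L.take i ++ L.getD i 0 :: L.drop (i + 1) := by
  conv_lhs => rw [← take_append_drop i L, drop_split_elem hi]

/-! ### standardisation -/

/-- rank function: renumber a list of distinct naturals as a permutation of `1, …, n`. -/
def std (u : List ℕ) : List ℕ := u.map fun a => (u.filter fun b => b ≤ a).length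

@[simp] theorem length_std (u : List ℕ) : (std u).length = u.length := by simp [std]

theorem filter_le_length_mono (u : List ℕ) {x y : ℕ} (hxy : x ≤ y) :
    (u.filter fun b => b ≤ x).length ≤ (u.filter fun b => b ≤ y).length := by
  induction u with
  | nil => simp
  | cons a t ih =>
    by_cases h1 : a ≤ x
    · simp [filter_cons, h1, le_trans h1 hxy]; omega
    · by_cases h2 : a ≤ y <;> simp [filter_cons, h1, h2] <;> omega

theorem filter_le_length_strict (u : List ℕ) {x y : ℕ} (hy : y ∈ u) (hxy : x < y) :
    (u.filter fun b => b ≤ x).length < (u.filter fun b => b ≤ y).length := by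
  induction u with
  | nil => simp at hy
  | cons a t ih =>
    rcases mem_cons.1 hy with heq | hyt
    · subst heq
      have h1 : ¬ (y ≤ x) := by omega
      simp [filter_cons, h1]
      have := filter_le_length_mono t (le_of_lt hxy)
      omega
    · have := ih hyt
      by_cases h1 : a ≤ x
      · simp [filter_cons, h1, le_trans h1 (le_of_lt hxy)]; omega
      · by_cases h2 : a ≤ y <;> simp [filter_cons, h1, h2] <;> omega

theorem std_getD {u : List ℕ} {i : ℕ} (hi : i < u.length) :
    (std u).getD i 0 = (u.filter fun b => b ≤ u.getD i 0).length := by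
  have h1 : i < (std u).length := by simp [hi]
  rw [getD_eq_getElem _ _ h1, getD_eq_getElem _ _ hi]
  simp [std]

theorem ordIso_std (u : List ℕ) : OrdIso u (std u) := by
  refine ⟨by simp, fun i j hi hj => ?_⟩
  rw [std_getD hi, std_getD hj]
  constructor
  · intro h
    apply filter_le_length_strict u _ h
    rw [getD_eq_getElem _ _ hj]
    exact getElem_mem _
  · intro h
    by_contra hcon
    push_neg at hcon
    exact absurd (filter_le_length_mono u hcon) (by omega)

theorem std_isPermList {u : List ℕ} (hnd : u.Nodup) : IsPermList (std u) := by
  have hlen : (std u).length = u.length := by simp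
  rw [IsPermList, hlen]
  have hsub : std u ⊆ range' 1 u.length := by
    intro k hk
    obtain ⟨a, ha, rfl⟩ := mem_map.1 hk
    rw [mem_range'_1]
    constructor
    · have : (u.filter fun b => b ≤ a) ≠ [] := by
        intro hnil
        have : a ∈ u.filter fun b => b ≤ a := mem_filter.2 ⟨ha, by simp⟩
        simp [hnil] at this
      have := length_pos_iff.2 this
      omega
    · have := length_filter_le (fun b => decide (b ≤ a)) u
      omega
  have hndstd : (std u).Nodup := by
    apply hnd.map_on
    intro a ha b hb hab
    by_contra hne
    rcases lt_or_gt_of_ne hne with h | h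
    · exact absurd hab (by have := filter_le_length_strict u hb h; omega)
    · exact absurd hab (by have := filter_le_length_strict u ha h; omega)
  apply Subperm.perm_of_length_le (subperm_of_subset hndstd hsub)
  simp [hlen]

theorem isPermList_facts {π : List ℕ} (h : IsPermList π) :
    π.Nodup ∧ ∀ k ∈ π, 0 < k := by
  constructor
  · exact h.nodup_iff.2 nodup_range'
  · intro k hk
    have := h.mem_iff.1 hk
    rw [mem_range'_1] at this
    omega

/-! ### doubling -/

theorem double_facts (π : List ℕ) (hnd : π.Nodup) :
    OrdIso π (π.map (· * 2)) ∧ (π.map (· * 2)).Nodup ∧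
      (∀ i, i < π.length → (π.map (· * 2)).getD i 0 = 2 * π.getD i 0) := by
  have hget : ∀ i, i < π.length → (π.map (· * 2)).getD i 0 = 2 * π.getD i 0 := by
    intro i hi
    rw [getD_eq_getElem _ _ (by simpa using hi), getD_eq_getElem _ _ hi, getElem_map]
    omega
  refine ⟨⟨by simp, fun i j hi hj => ?_⟩, ?_, hget⟩
  · rw [hget i hi, hget j hj]; omega
  · exact hnd.map (fun a b hab => by omega)

end PR

namespace PR
open List

theorem fmove_mem_u {I₁ I₂ I₃ I₄ : List ℕ} {x y z : ℕ} {u v : List ℕ}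
    (hu : u = I₁ ++ x :: (I₂ ++ y :: (I₃ ++ z :: I₄)))
    (hv : v = I₁ ++ x :: (I₂ ++ z :: (I₃ ++ I₄))) : ∀ a ∈ u, a = y ∨ a ∈ v := by
  subst hu hv; intro a ha
  simp only [mem_append, mem_cons] at ha ⊢; tauto

theorem fmove_nodup' {u v : List ℕ} (h : FMove u v) (hnd : u.Nodup) : v.Nodup := by
  obtain ⟨A, B, C, D, xx, yy, zz, h1, h2, h3, h4⟩ := h
  exact (fmove_nodup h3 h4 hnd).1

theorem fmove_mem' {u v : List ℕ} (h : FMove u v) : ∀ a ∈ v, a ∈ u := by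
  obtain ⟨A, B, C, D, xx, yy, zz, h1, h2, h3, h4⟩ := h
  exact fmove_mem h3 h4

theorem fmove_length' {u v : List ℕ} (h : FMove u v) : v.length + 1 = u.length := by
  obtain ⟨A, B, C, D, xx, yy, zz, h1, h2, h3, h4⟩ := h
  exact fmove_length h3 h4

theorem getD_mem {π : List ℕ} {i : ℕ} (hi : i < π.length) : π.getD i 0 ∈ π := by
  rw [getD_eq_getElem _ _ hi]; exact getElem_mem _

theorem getD_ne {π : List ℕ} (hnd : π.Nodup) {i j : ℕ} (hi : i < π.length)
    (hj : j < π.length) (hij : i ≠ j) : π.getD i 0 ≠ π.getD j 0 := by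
  rw [getD_eq_getElem _ _ hi, getD_eq_getElem _ _ hj]
  intro hc
  exact hij ((hnd.getElem_inj_iff).1 hc)

theorem nonmin_witness {π : List ℕ} (hnd : π.Nodup) {i : ℕ} (hi : i < π.length)
    (h : ¬IsLRMin π i) : ∃ j, j < i ∧ π.getD j 0 < π.getD i 0 := by
  unfold IsLRMin at h
  push_neg at h
  obtain ⟨j, hj, hle⟩ := h
  refine ⟨j, hj, ?_⟩
  have := getD_ne hnd (lt_trans hj hi) hi (by omega)
  omega

/-- the key reduction: a permutation with two non-minima is equivalent to a
shorter permutation. -/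
theorem reduce {π : List ℕ} (hπ : IsPermList π) {c d : ℕ} (hcd : c < d) (hd : d < π.length)
    (hcm : ¬IsLRMin π c) (hdm : ¬IsLRMin π d) :
    ∃ σ : List ℕ, IsPermList σ ∧ σ.length + 1 = π.length ∧ HasNonMin σ ∧
      Relation.ReflTransGen Step π σ := by
  obtain ⟨hnd, hpos⟩ := isPermList_facts hπ
  have hc : c < π.length := lt_trans hcd hd
  obtain ⟨i₀, hi₀c, hi₀v⟩ := nonmin_witness hnd hc hcm
  obtain ⟨j₀, hj₀d, hj₀v⟩ := nonmin_witness hnd hd hdm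
  have hne : π.getD c 0 ≠ π.getD d 0 := getD_ne hnd hc hd (by omega)
  rcases lt_or_gt_of_ne hne with hval | hval
  · -- case A : single forward move
    have h2 : π.drop (c+1) = slice π (c+1) d ++ π.getD d 0 :: π.drop (d+1) := by
      rw [drop_split (show c+1 ≤ d by omega), drop_split_elem hd]
    have hu1 : π = π.take i₀ ++ π.getD i₀ 0 :: (slice π (i₀+1) c ++ π.getD c 0 ::
        (slice π (c+1) d ++ π.getD d 0 :: π.drop (d+1))) := by
      conv_lhs => rw [split2 hi₀c hc, h2]
    set v := π.take c ++ π.getD d 0 :: (slice π (c+1) d ++ π.drop (d+1)) with hvdef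
    have hv1 : v = π.take i₀ ++ π.getD i₀ 0 :: (slice π (i₀+1) c ++ π.getD d 0 ::
        (slice π (c+1) d ++ π.drop (d+1))) := by
      rw [hvdef, take_split hi₀c (le_of_lt hc)]
      simp
    have hmv : FMove π v :=
      ⟨π.take i₀, slice π (i₀+1) c, slice π (c+1) d, π.drop (d+1), _, _, _,
        hi₀v, hval, hu1, hv1⟩
    obtain ⟨hvnd, -⟩ := fmove_nodup hu1 hv1 hnd
    have hσperm := std_isPermList hvnd
    have hstep : Step π (std v) :=
      Or.inl (mkStepF hnd hpos (ordIso_rfl π) hmv (ordIso_std v) hσperm)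
    have hinv := fmove_invariants hmv
    have hstat := ordIso_stats (ordIso_std v)
    refine ⟨std v, hσperm, ?_, hstat.2.2.2.1 hinv.2.2.2.2.2, Relation.ReflTransGen.single hstep⟩
    have := fmove_length hu1 hv1
    simp only [length_std]
    omega
  · -- case B : three moves
    set U := π.map (· * 2) with hUdef
    obtain ⟨hOIU, hUnd, hUget⟩ := double_facts π hnd
    have hUlen : U.length = π.length := by simp [hUdef]
    have hcU : c < U.length := by omega
    have hdU : d < U.length := by omega
    have hi₀U : i₀ < U.length := by omega
    have hj₀U : j₀ < U.length := by omega
    have hMpos : 0 < π.getD c 0 := hpos _ (getD_mem hc)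
    set y := 2 * π.getD c 0 - 1 with hydef
    have hyU : y ∉ U := by
      intro hy
      rw [hUdef] at hy
      obtain ⟨a, _, ha⟩ := mem_map.1 hy
      omega
    have hUpos : ∀ k ∈ U, 0 < k := by
      intro k hk
      rw [hUdef] at hk
      obtain ⟨a, ha, rfl⟩ := mem_map.1 hk
      have := hpos a ha
      omega
    have hUc : U.getD c 0 = 2 * π.getD c 0 := hUget c (by omega)
    have hUd : U.getD d 0 = 2 * π.getD d 0 := hUget d (by omega)
    have hUi₀ : U.getD i₀ 0 = 2 * π.getD i₀ 0 := hUget i₀ (by omega)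
    have hUj₀ : U.getD j₀ 0 = 2 * π.getD j₀ 0 := hUget j₀ (by omega)
    set w₁ := U.take c ++ y :: (slice U (c+1) (d+1) ++ U.getD c 0 :: U.drop (d+1)) with hw₁def
    set w₂ := U.take c ++ y :: (slice U (c+1) d ++ U.getD c 0 :: U.drop (d+1)) with hw₂def
    set w₃ := U.take c ++ U.getD c 0 :: (slice U (c+1) d ++ U.drop (d+1)) with hw₃def
    -- move 1 : w₁ → U (reverse step π → std w₁)
    have hu1 : w₁ = U.take i₀ ++ U.getD i₀ 0 :: (slice U (i₀+1) c ++ y ::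
        (slice U (c+1) (d+1) ++ U.getD c 0 :: U.drop (d+1))) := by
      rw [hw₁def, take_split hi₀c (le_of_lt hcU)]
      simp
    have hv1 : U = U.take i₀ ++ U.getD i₀ 0 :: (slice U (i₀+1) c ++ U.getD c 0 ::
        (slice U (c+1) (d+1) ++ U.drop (d+1))) := by
      conv_lhs => rw [split2 hi₀c hcU,
        drop_split (show c+1 ≤ d+1 by omega)]
    have ha₀y : U.getD i₀ 0 < y := by omega
    have hyUc : y < U.getD c 0 := by omega
    have hmv1 : FMove w₁ U :=
      ⟨U.take i₀, slice U (i₀+1) c, slice U (c+1) (d+1), U.drop (d+1), _, _, _,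
        ha₀y, hyUc, hu1, hv1⟩
    have hw₁nd : w₁.Nodup := fmove_nodup_rev hu1 hv1 hUnd (by
      intro hmem; exact hyU hmem)
    have hw₁pos : ∀ k ∈ w₁, 0 < k := by
      intro k hk
      rcases fmove_mem_u hu1 hv1 k hk with rfl | hk'
      · omega
      · exact hUpos k hk'
    have hσ₁perm := std_isPermList hw₁nd
    have hstep1 : Step π (std w₁) :=
      Or.inr (mkStepR hw₁nd hw₁pos hOIU hmv1 (ordIso_std w₁) hσ₁perm)
    -- move 2 : w₁ → w₂ (forward step std w₁ → std w₂)
    have hslice : slice U (c+1) (d+1) = slice U (c+1) d ++ U.getD d 0 :: [] := by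
      rw [slice_split (show c+1 ≤ d by omega) (show d < d+1 by omega) (by omega),
        slice_nil (le_refl (d+1))]
    have hb₀Ud : U.getD j₀ 0 < U.getD d 0 := by omega
    have hUdUc : U.getD d 0 < U.getD c 0 := by omega
    have hj₀c : j₀ ≠ c := by
      intro hceq
      subst hceq
      omega
    have hmv2 : FMove w₁ w₂ := by
      rcases lt_or_gt_of_ne hj₀c with hj₀lt | hj₀gt
      · refine ⟨U.take j₀, slice U (j₀+1) c ++ y :: slice U (c+1) d, [], U.drop (d+1),
          U.getD j₀ 0, U.getD d 0, U.getD c 0, hb₀Ud, hUdUc, ?_, ?_⟩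
        · rw [hw₁def, hslice, take_split hj₀lt (le_of_lt hcU)]
          simp
        · rw [hw₂def, take_split hj₀lt (le_of_lt hcU)]
          simp
      · have hA : slice U (c+1) d = slice U (c+1) j₀ ++ U.getD j₀ 0 :: slice U (j₀+1) d := by
          exact slice_split (show c+1 ≤ j₀ by omega) hj₀d (by omega)
        refine ⟨U.take c ++ y :: slice U (c+1) j₀, slice U (j₀+1) d, [], U.drop (d+1),
          U.getD j₀ 0, U.getD d 0, U.getD c 0, hb₀Ud, hUdUc, ?_, ?_⟩
        · rw [hw₁def, hslice, hA]
          simp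
        · rw [hw₂def, hA]
          simp
    have hw₂nd : w₂.Nodup := fmove_nodup' hmv2 hw₁nd
    have hw₂pos : ∀ k ∈ w₂, 0 < k := fun k hk => hw₁pos k (fmove_mem' hmv2 k hk)
    have hσ₂perm := std_isPermList hw₂nd
    have hstep2 : Step (std w₁) (std w₂) :=
      Or.inl (mkStepF hw₁nd hw₁pos (OrdIso.symm (ordIso_std w₁)) hmv2 (ordIso_std w₂) hσ₂perm)
    -- move 3 : w₂ → w₃
    have hu3 : w₂ = U.take i₀ ++ U.getD i₀ 0 :: (slice U (i₀+1) c ++ y ::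
        (slice U (c+1) d ++ U.getD c 0 :: U.drop (d+1))) := by
      rw [hw₂def, take_split hi₀c (le_of_lt hcU)]
      simp
    have hv3 : w₃ = U.take i₀ ++ U.getD i₀ 0 :: (slice U (i₀+1) c ++ U.getD c 0 ::
        (slice U (c+1) d ++ U.drop (d+1))) := by
      rw [hw₃def, take_split hi₀c (le_of_lt hcU)]
      simp
    have hmv3 : FMove w₂ w₃ :=
      ⟨U.take i₀, slice U (i₀+1) c, slice U (c+1) d, U.drop (d+1), _, _, _,
        ha₀y, hyUc, hu3, hv3⟩
    obtain ⟨hw₃nd, -⟩ := fmove_nodup hu3 hv3 hw₂nd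
    have hw₃pos : ∀ k ∈ w₃, 0 < k := fun k hk => hw₂pos k (fmove_mem hu3 hv3 k hk)
    have hσ₃perm := std_isPermList hw₃nd
    have hstep3 : Step (std w₂) (std w₃) :=
      Or.inl (mkStepF hw₂nd hw₂pos (OrdIso.symm (ordIso_std w₂)) hmv3 (ordIso_std w₃) hσ₃perm)
    -- conclude
    have hlen1 : U.length + 1 = w₁.length := fmove_length hu1 hv1
    have hlen2 : w₂.length + 1 = w₁.length := fmove_length' hmv2
    have hlen3 : w₃.length + 1 = w₂.length := fmove_length hu3 hv3
    have hHNM : HasNonMin (std w₃) :=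
      (ordIso_stats (ordIso_std w₃)).2.2.2.1 (fmove_invariants hmv3).2.2.2.2.2
    refine ⟨std w₃, hσ₃perm, ?_, hHNM, ?_⟩
    · simp only [length_std]; omega
    · exact Relation.ReflTransGen.head hstep1
        (Relation.ReflTransGen.head hstep2 (Relation.ReflTransGen.single hstep3))

end PR

namespace PR
open List

/-! ### permutations with a unique non-minimum -/

def UniqueNonMin (τ : List ℕ) : Prop :=
  ∃ p, p < τ.length ∧ ¬IsLRMin τ p ∧ ∀ j, j < τ.length → j ≠ p → IsLRMin τ j

theorem conn : ∀ n (π : List ℕ), π.length = n → IsPermList π → HasNonMin π →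
    ∃ τ, IsPermList τ ∧ UniqueNonMin τ ∧ Relation.ReflTransGen Step π τ := by
  intro n
  induction n using Nat.strong_induction_on with
  | _ n ih =>
    intro π hlen hπ hnm
    by_cases htwo : ∃ c, ∃ d, c < d ∧ d < π.length ∧ ¬IsLRMin π c ∧ ¬IsLRMin π d
    · obtain ⟨c, d, hcd, hd, hcm, hdm⟩ := htwo
      obtain ⟨σ, hσ, hlen', hσnm, hchain⟩ := reduce hπ hcd hd hcm hdm
      obtain ⟨τ, h1, h2, h3⟩ := ih σ.length (by omega) σ rfl hσ hσnm
      exact ⟨τ, h1, h2, hchain.trans h3⟩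
    · obtain ⟨p, hp, hpm⟩ := hnm
      refine ⟨π, hπ, ⟨p, hp, hpm, ?_⟩, Relation.ReflTransGen.refl⟩
      intro j hj hjp
      by_contra hjm
      rcases lt_trichotomy j p with h | h | h
      · exact htwo ⟨j, p, h, hp, hjm, hpm⟩
      · exact hjp h
      · exact htwo ⟨p, j, h, hj, hpm, hjm⟩

/-! ### statistics of a unique-non-min permutation -/

theorem getD_map_range {N j : ℕ} (g : ℕ → Bool) (hj : j < N) :
    (((range N).map g).getD j false) = g j := by
  rw [getD_eq_getElem _ _ (by simpa using hj)]
  simp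

theorem firstIdx_eq_some {L : List Bool} {p : ℕ} (hp : p < L.length)
    (hpt : L.getD p false = true) (hpf : ∀ j, j < p → L.getD j false = false) :
    firstIdx L = some p := by
  induction L generalizing p with
  | nil => simp at hp
  | cons b t ih =>
    cases p with
    | zero => simp_all [firstIdx]
    | succ p =>
      have hb : b = false := by simpa using hpf 0 (by omega)
      subst hb
      simp only [firstIdx, Bool.false_eq_true, if_false]
      rw [ih (by simpa using hp) (by simpa using hpt)
        (fun j hj => by simpa using hpf (j+1) (by omega))]
      rfl

theorem unm_leftNonMin {τ : List ℕ} {p : ℕ} (hp : p < τ.length) (hpm : ¬IsLRMin τ p)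
    (hmin : ∀ j, j < τ.length → j ≠ p → IsLRMin τ j) : leftNonMin τ = some p := by
  rw [leftNonMin, find?_range_eq_firstIdx]
  apply firstIdx_eq_some (by simpa using hp)
  · rw [getD_map_range _ hp]
    simpa using hpm
  · intro j hj
    rw [getD_map_range _ (by omega)]
    simpa using hmin j (by omega) (by omega)

theorem filter_ne_range_len {N p : ℕ} (hp : p < N) :
    ((range N).filter (fun j => decide (j ≠ p))).length = N - 1 := by
  induction N with
  | zero => exact absurd hp (by omega)
  | succ n ih =>
    rw [range_succ, filter_append, length_append]
    rcases Nat.lt_or_ge p n with h | h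
    · have e1 := ih h
      have e2 : (([n] : List ℕ).filter (fun j => decide (j ≠ p))) = [n] := by
        rw [filter_cons, if_pos (by simp; omega)]
        rfl
      rw [e1, e2]
      simp
      omega
    · have hpn : p = n := by omega
      subst hpn
      have e2 : (([p] : List ℕ).filter (fun j => decide (j ≠ p))) = [] := by
        rw [filter_cons, if_neg (by simp)]
        rfl
      have e1 : (range p).filter (fun j => decide (j ≠ p)) = range p :=
        filter_eq_self.2 (fun a ha => by
          simp only [mem_range] at ha
          simp
          omega)
      rw [e1, e2]
      simp

theorem unm_numLRMin {τ : List ℕ} {p : ℕ} (hp : p < τ.length) (hpm : ¬IsLRMin τ p)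
    (hmin : ∀ j, j < τ.length → j ≠ p → IsLRMin τ j) : numLRMin τ = τ.length - 1 := by
  rw [numLRMin, filter_congr (fun j hj => ?_), filter_ne_range_len hp]
  simp only [mem_range] at hj
  by_cases hjp : j = p
  · subst hjp; simp [hpm]
  · simp [hmin j hj hjp, hjp]

theorem filter_eq_range {N p : ℕ} (hp : p < N) :
    (range N).filter (fun j => decide (j = p)) = [p] := by
  induction N with
  | zero => exact absurd hp (by omega)
  | succ n ih =>
    rw [range_succ, filter_append]
    rcases Nat.lt_or_ge p n with h | h
    · have e2 : (([n] : List ℕ).filter (fun j => decide (j = p))) = [] := by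
        rw [filter_cons, if_neg (by simp; omega)]
        rfl
      rw [ih h, e2, append_nil]
    · have hpn : p = n := by omega
      subst hpn
      have e2 : (([p] : List ℕ).filter (fun j => decide (j = p))) = [p] := by
        rw [filter_cons, if_pos (by simp)]
        rfl
      have e1 : (range p).filter (fun j => decide (j = p)) = [] :=
        filter_eq_nil_iff.2 (fun a ha => by
          simp only [mem_range] at ha
          simp
          omega)
      rw [e1, e2, nil_append]

theorem unm_nonMinVals {τ : List ℕ} {p : ℕ} (hp : p < τ.length) (hpm : ¬IsLRMin τ p)
    (hmin : ∀ j, j < τ.length → j ≠ p → IsLRMin τ j) : nonMinVals τ = [τ.getD p 0] := by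
  rw [nonMinVals, filter_congr (fun j hj => ?_), filter_eq_range hp]
  · simp
  · simp only [mem_range] at hj
    by_cases hjp : j = p
    · subst hjp; simp [hpm]
    · simp [hmin j hj hjp, hjp]

theorem unm_maxNonMin {τ : List ℕ} {p : ℕ} (hp : p < τ.length) (hpm : ¬IsLRMin τ p)
    (hmin : ∀ j, j < τ.length → j ≠ p → IsLRMin τ j) : maxNonMin τ = τ.getD p 0 := by
  rw [maxNonMin, unm_nonMinVals hp hpm hmin]
  simp

theorem filter_range_getD (τ : List ℕ) (P : ℕ → Bool) :
    ((range τ.length).filter (fun i => P (τ.getD i 0))).length = (τ.filter P).length := by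
  conv_rhs => rw [← map_getD_range τ]
  rw [filter_map, length_map]
  rfl

theorem filter_lt_range' : ∀ (N t : ℕ), t ≤ N + 1 →
    ((range' 1 N).filter (fun b => decide (b < t))).length = t - 1 := by
  intro N
  induction N with
  | zero => intro t ht; interval_cases t <;> simp
  | succ n ih =>
    intro t ht
    rw [range'_concat, filter_append, length_append]
    rcases Nat.lt_or_ge t (n + 2) with h | h
    · have e2 : (([1 + 1 * n] : List ℕ).filter (fun b => decide (b < t))).length = 0 := by
        rw [filter_cons, if_neg (by simp; omega)]
        rfl
      rw [ih t (by omega), e2]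
      omega
    · have ht2 : t = n + 2 := by omega
      subst ht2
      have e1 : (range' 1 n).filter (fun b => decide (b < n + 2)) = range' 1 n :=
        filter_eq_self.2 (fun a ha => by
          rw [mem_range'_1] at ha
          simp
          omega)
      have e2 : (([1 + 1 * n] : List ℕ).filter (fun b => decide (b < n + 2))).length = 1 := by
        rw [filter_cons, if_pos (by simp; omega)]
        rfl
      rw [e1, e2]
      simp

theorem unm_vStatMax {τ : List ℕ} (hτ : IsPermList τ) {p : ℕ} (hp : p < τ.length)
    (hpm : ¬IsLRMin τ p) (hmin : ∀ j, j < τ.length → j ≠ p → IsLRMin τ j) :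
    vStatMax τ = τ.getD p 0 - 1 := by
  have hmax := unm_maxNonMin hp hpm hmin
  rw [vStatMax, hmax]
  have hcongr : ∀ j ∈ range τ.length,
      (decide (IsLRMin τ j) && decide (τ.getD j 0 < τ.getD p 0)) =
        (fun i => (fun b => decide (b < τ.getD p 0)) (τ.getD i 0)) j := by
    intro j hj
    simp only [mem_range] at hj
    by_cases hjp : j = p
    · subst hjp; simp [hpm]
    · simp [hmin j hj hjp]
  rw [filter_congr hcongr, filter_range_getD τ (fun b => decide (b < τ.getD p 0))]
  have hperm : (τ.filter (fun b => decide (b < τ.getD p 0))).length =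
      ((range' 1 τ.length).filter (fun b => decide (b < τ.getD p 0))).length :=
    (hτ.filter _).length_eq
  rw [hperm]
  apply filter_lt_range'
  have := hτ.mem_iff.1 (getD_mem hp)
  rw [mem_range'_1] at this
  omega

/-! ### uniqueness -/

theorem unm_unique {τ τ' : List ℕ} (hτ : IsPermList τ) (hτ' : IsPermList τ')
    (h1 : UniqueNonMin τ) (h2 : UniqueNonMin τ')
    (hm : numLRMin τ = numLRMin τ') (hl : leftNonMin τ = leftNonMin τ')
    (hv : vStatMax τ = vStatMax τ') : τ = τ' := by
  obtain ⟨p, hp, hpm, hmin⟩ := h1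
  obtain ⟨p', hp', hpm', hmin'⟩ := h2
  -- same position
  have hpp : p = p' := by
    have := (unm_leftNonMin hp hpm hmin) ▸ (unm_leftNonMin hp' hpm' hmin') ▸ hl
    simpa using this
  subst hpp
  -- same length
  have hN : τ.length = τ'.length := by
    have e1 := unm_numLRMin hp hpm hmin
    have e2 := unm_numLRMin hp' hpm' hmin'
    rw [e1, e2] at hm
    omega
  -- same value at p
  have hvalp : τ.getD p 0 = τ'.getD p 0 := by
    have e1 := unm_vStatMax hτ hp hpm hmin
    have e2 := unm_vStatMax hτ' hp' hpm' hmin'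
    have hpos1 : 0 < τ.getD p 0 := by
      have := hτ.mem_iff.1 (getD_mem hp)
      rw [mem_range'_1] at this; omega
    have hpos2 : 0 < τ'.getD p 0 := by
      have := hτ'.mem_iff.1 (getD_mem hp')
      rw [mem_range'_1] at this; omega
    omega
  -- erased lists
  set L := τ.take p ++ τ.drop (p+1) with hLdef
  set L' := τ'.take p ++ τ'.drop (p+1) with hL'def
  have hsorted : ∀ (σ : List ℕ), p < σ.length → (¬IsLRMin σ p) →
      (∀ j, j < σ.length → j ≠ p → IsLRMin σ j) →
      (σ.take p ++ σ.drop (p+1)).Pairwise (· > ·) := by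
    intro σ hplen hσp hσmin
    rw [pairwise_iff_getElem]
    have hlenT : (σ.take p).length = p := by rw [length_take]; omega
    have hlt : (σ.take p ++ σ.drop (p+1)).length = σ.length - 1 := by
      simp; omega
    intro a b ha hb hab
    rw [hlt] at ha hb
    have key : ∀ k, ∀ (hk : k < (σ.take p ++ σ.drop (p+1)).length),
        (σ.take p ++ σ.drop (p+1))[k] = σ.getD (if k < p then k else k + 1) 0 := by
      intro k hk
      rw [hlt] at hk
      by_cases hkp : k < p
      · rw [getElem_append_left (by omega : k < (σ.take p).length), getElem_take,
          if_pos hkp, getD_eq_getElem _ _ (by omega : k < σ.length)]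
      · rw [getElem_append_right (by omega : (σ.take p).length ≤ k), getElem_drop,
          if_neg hkp, getD_eq_getElem _ _ (by omega : k + 1 < σ.length)]
        congr 1
        omega
    rw [key a (by omega), key b (by omega)]
    set ia := if a < p then a else a + 1 with hia
    set ib := if b < p then b else b + 1 with hib
    have hiab : ia < ib := by rw [hia, hib]; split <;> split <;> omega
    have hibne : ib ≠ p := by rw [hib]; split <;> omega
    have hiblen : ib < σ.length := by rw [hib]; split <;> omega
    exact hσmin ib hiblen hibne ia hiab
  have hLs := hsorted τ hp hpm hmin
  have hL's := hsorted τ' hp' hpm' hmin'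
  -- perm
  have hτsplit : τ = τ.take p ++ τ.getD p 0 :: τ.drop (p+1) := split1 hp
  have hτ'split : τ' = τ'.take p ++ τ'.getD p 0 :: τ'.drop (p+1) := split1 hp'
  have hpermτ : τ.Perm (τ.getD p 0 :: L) := by
    conv_lhs => rw [hτsplit]
    exact perm_middle
  have hpermτ' : τ'.Perm (τ'.getD p 0 :: L') := by
    conv_lhs => rw [hτ'split]
    exact perm_middle
  have hLL' : L.Perm L' := by
    have h3 : (τ.getD p 0 :: L).Perm (τ'.getD p 0 :: L') := by
      refine hpermτ.symm.trans (.trans ?_ hpermτ')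
      rw [IsPermList] at hτ hτ'
      exact hτ.trans (hN ▸ hτ'.symm)
    rw [hvalp] at h3
    exact h3.cons_inv
  haveI : IsAntisymm ℕ (· > ·) := ⟨fun a b h1 h2 => by omega⟩
  have hLeq : L = L' := hLL'.eq_of_pairwise (fun _ _ _ _ h1 h2 => by omega) hLs hL's
  have hlenT : (τ.take p).length = p := by rw [length_take]; omega
  have hlenT' : (τ'.take p).length = p := by rw [length_take]; omega
  have e1 : L.take p = τ.take p := by
    rw [hLdef, take_append, take_take, min_self, hlenT, Nat.sub_self,
      take_zero, append_nil]
  have e2 : L'.take p = τ'.take p := by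
    rw [hL'def, take_append, take_take, min_self, hlenT', Nat.sub_self,
      take_zero, append_nil]
  have e3 : L.drop p = τ.drop (p+1) := by
    rw [hLdef, drop_append, hlenT, Nat.sub_self, drop_zero,
      drop_of_length_le (le_of_eq hlenT), nil_append]
  have e4 : L'.drop p = τ'.drop (p+1) := by
    rw [hL'def, drop_append, hlenT', Nat.sub_self, drop_zero,
      drop_of_length_le (le_of_eq hlenT'), nil_append]
  rw [hτsplit, hτ'split, hvalp, ← e1, ← e2, ← e3, ← e4, hLeq]

end PR

namespace PR
open List

theorem part_b : ∀ π σ : List ℕ, IsPermList π → IsPermList σ → HasNonMin π → HasNonMin σ →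
    (PermEquiv pat123 pat13S π σ ↔
      numLRMin π = numLRMin σ ∧ leftNonMin π = leftNonMin σ ∧ vStatMax π = vStatMax σ) := by
  intro π σ hπ hσ hπn hσn
  constructor
  · exact equiv_invariants
  · rintro ⟨hm, hl, hv⟩
    obtain ⟨τ1, hτ1p, hτ1u, hc1⟩ := conn π.length π rfl hπ hπn
    obtain ⟨τ2, hτ2p, hτ2u, hc2⟩ := conn σ.length σ rfl hσ hσn
    obtain ⟨m1, l1, v1⟩ := equiv_invariants hc1
    obtain ⟨m2, l2, v2⟩ := equiv_invariants hc2
    have heq : τ1 = τ2 := unm_unique hτ1p hτ2p hτ1u hτ2u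
      (m1.symm.trans (hm.trans m2)) (l1.symm.trans (hl.trans l2))
      (v1.symm.trans (hv.trans v2))
    exact hc1.trans (heq ▸ (permEquiv_symm hσ hc2))

end PR


/-- under `123 ↔ 13★`: (a) every reverse identity permutation is
isolated; (b) two permutations each having a non-left-to-right-minimum element
are equivalent iff they agree in: the number of left-to-right minima, the
position of the leftmost non-left-to-right-minimum element, and the number of
left-to-right minima smaller than the largest non-left-to-right-minimum
element. -/
theorem classes_13star :
    (∀ n : ℕ, Isolated pat123 pat13S (ridPerm n)) ∧
    (∀ π σ : List ℕ, IsPermList π → IsPermList σ → HasNonMin π → HasNonMin σ →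
      (PermEquiv pat123 pat13S π σ ↔
        numLRMin π = numLRMin σ ∧ leftNonMin π = leftNonMin σ ∧
          vStatMax π = vStatMax σ)) := by
  exact ⟨PR.part_a, PR.part_b⟩
end
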